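/- arXiv:2109.03005 — 11 statements merged into one kernel-verified Lean document; each statement's English description precedes it below -/
import Mathlib

section
/- Let G be a connected simple graph with adjacency matrix A and Perron eigenvector ν (positive eigenvector for the largest eigenvalue λ₁). If P = {V₁,...,Vₘ} is a weight-equitable partition of V(G), then the normalized weight-quotient matrix B̄* = (S̄*)ᵀ A S̄* has λ₁ as an eigenvalue; in fact its largest eigenvalue μ₁ equals λ₁. -/
open Finset Matrix

variable {V : Type*}

/-- The weight-intersection number `b*` of vertex `u` with respect to cell `D`,
for weight vector `ν`. -/
noncomputable def wInt [Fintype V] (G : SimpleGraph V) [DecidableRel G.Adj] (ν : V → ℝ)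
    (D : Finset V) (u : V) : ℝ :=
  (∑ v ∈ D, if G.Adj u v then ν v else 0) / ν u

/-- `Vc` lists the cells of a partition of the vertex set. -/
def IsPartition [Fintype V] {m : ℕ} (Vc : Fin m → Finset V) : Prop :=
  ∀ v : V, ∃! i : Fin m, v ∈ Vc i

/-- The partition with cells `Vc` is weight-equitable w.r.t. the weights `ν`. -/
def IsWeightEquitable [Fintype V] (G : SimpleGraph V) [DecidableRel G.Adj] (ν : V → ℝ)
    {m : ℕ} (Vc : Fin m → Finset V) : Prop :=
  ∀ i j : Fin m, ∀ u ∈ Vc i, ∀ u' ∈ Vc i, wInt G ν (Vc j) u = wInt G ν (Vc j) u'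

/-- The partition with cells `Vc` is equitable. -/
def IsEquitable [Fintype V] [DecidableEq V] (G : SimpleGraph V) [DecidableRel G.Adj]
    {m : ℕ} (Vc : Fin m → Finset V) : Prop :=
  ∀ i j : Fin m, ∀ u ∈ Vc i, ∀ u' ∈ Vc i,
    ((Vc j).filter (fun v => G.Adj u v)).card = ((Vc j).filter (fun v => G.Adj u' v)).card

/-- Theorem: for a connected graph with Perron data `(lam, ν)` and a weight-equitable
partition, the normalized weight-quotient matrix has `lam` as its largest eigenvalue. -/
theorem largest_eigenvalue_of_normalized_weight_quotient
    [Fintype V] [DecidableEq V] (G : SimpleGraph V) [DecidableRel G.Adj]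
    (hG : G.Connected) (ν : V → ℝ) (lam : ℝ)
    (hν : ∀ v, 0 < ν v)
    (heig : (G.adjMatrix ℝ).mulVec ν = lam • ν)
    (hmax : ∀ (μ : ℝ) (x : V → ℝ), x ≠ 0 → (G.adjMatrix ℝ).mulVec x = μ • x → μ ≤ lam)
    {m : ℕ} (Vc : Fin m → Finset V)
    (hm : m < Fintype.card V)
    (hpart : IsPartition Vc) (hne : ∀ i, (Vc i).Nonempty)
    (hWE : IsWeightEquitable G ν Vc) :
    let Sbar : Matrix V (Fin m) ℝ :=
      fun u i => if u ∈ Vc i then ν u / Real.sqrt (∑ w ∈ Vc i, (ν w) ^ 2) else 0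
    let Bbar : Matrix (Fin m) (Fin m) ℝ := Sbarᵀ * G.adjMatrix ℝ * Sbar
    (∃ x : Fin m → ℝ, x ≠ 0 ∧ Bbar.mulVec x = lam • x) ∧
      (∀ (μ : ℝ) (x : Fin m → ℝ), x ≠ 0 → Bbar.mulVec x = μ • x → μ ≤ lam) := by
  intro Sbar Bbar
  set x : Fin m → ℝ := fun i => Real.sqrt (∑ w ∈ Vc i, (ν w) ^ 2) with hxdef
  have hsum : ∀ i, 0 < ∑ w ∈ Vc i, (ν w) ^ 2 := fun i =>
    Finset.sum_pos (fun w _ => pow_pos (hν w) 2) (hne i)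
  have hx : ∀ i, 0 < x i := fun i => Real.sqrt_pos.mpr (hsum i)
  have hx2 : ∀ i, x i ^ 2 = ∑ w ∈ Vc i, (ν w) ^ 2 := fun i =>
    Real.sq_sqrt (le_of_lt (hsum i))
  have hdisj : ∀ {u : V} {i j : Fin m}, u ∈ Vc i → u ∈ Vc j → i = j := by
    intro u i j hi hj
    obtain ⟨k, _, huniq⟩ := hpart u
    rw [huniq i hi, huniq j hj]
  -- Sbarᵀ * Sbar = 1
  have hSS : Sbarᵀ * Sbar = (1 : Matrix (Fin m) (Fin m) ℝ) := by
    ext i j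
    simp only [Matrix.mul_apply, Matrix.transpose_apply]
    simp only [Sbar]
    by_cases h : i = j
    · subst h
      rw [Matrix.one_apply_eq]
      have : ∀ u : V, (if u ∈ Vc i then ν u / x i else 0) * (if u ∈ Vc i then ν u / x i else 0)
          = if u ∈ Vc i then ν u ^ 2 / x i ^ 2 else 0 := by
        intro u; split_ifs with h'
        · rw [div_mul_div_comm, ← pow_two, ← pow_two]
        · ring
      rw [Finset.sum_congr rfl (fun u _ => this u), Finset.sum_ite_mem, Finset.univ_inter,
        ← Finset.sum_div, ← hx2 i, div_self (pow_ne_zero 2 (ne_of_gt (hx i)))]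
    · rw [Matrix.one_apply_ne h]
      apply Finset.sum_eq_zero
      intro u _
      by_cases hi : u ∈ Vc i
      · by_cases hj : u ∈ Vc j
        · exact absurd (hdisj hi hj) h
        · simp [hi, hj]
      · simp [hi]
  -- key entrywise formula: (A * Sbar) u i = wInt * ν u / x i
  have hkey : ∀ (u : V) (i : Fin m),
      (G.adjMatrix ℝ * Sbar) u i = wInt G ν (Vc i) u * ν u / x i := by
    intro u i
    rw [Matrix.mul_apply]
    have : ∀ v : V, (G.adjMatrix ℝ) u v * Sbar v i
        = if v ∈ Vc i then (if G.Adj u v then ν v else 0) / x i else 0 := by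
      intro v
      simp only [SimpleGraph.adjMatrix_apply, Sbar]
      split_ifs <;> ring
    rw [Finset.sum_congr rfl (fun v _ => this v), Finset.sum_ite_mem, Finset.univ_inter,
      ← Finset.sum_div]
    rw [wInt, div_mul_cancel₀ _ (ne_of_gt (hν u))]
  -- A * Sbar = Sbar * Bbar
  set C : Matrix (Fin m) (Fin m) ℝ :=
    fun j i => wInt G ν (Vc i) ((hne j).choose) * x j / x i with hCdef
  have hAS : G.adjMatrix ℝ * Sbar = Sbar * C := by
    ext u i
    rw [hkey u i, Matrix.mul_apply]
    obtain ⟨j₀, hj₀, huniq⟩ := hpart u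
    rw [Finset.sum_eq_single j₀]
    · have hrep : (hne j₀).choose ∈ Vc j₀ := (hne j₀).choose_spec
      have hw : wInt G ν (Vc i) ((hne j₀).choose) = wInt G ν (Vc i) u :=
        hWE j₀ i _ hrep u hj₀
      simp only [Sbar, C, if_pos hj₀, hw]
      have hxj : Real.sqrt (∑ w ∈ Vc j₀, ν w ^ 2) = x j₀ := rfl
      rw [hxj]
      field_simp [ne_of_gt (hx i), ne_of_gt (hx j₀)]
    · intro j _ hjne
      have : u ∉ Vc j := fun h => hjne (huniq j h)
      simp [Sbar, this]
    · intro h; exact absurd (Finset.mem_univ j₀) h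
  have hBC : Bbar = C := by
    show Sbarᵀ * G.adjMatrix ℝ * Sbar = C
    rw [Matrix.mul_assoc, hAS, ← Matrix.mul_assoc, hSS, Matrix.one_mul]
  have hASB : G.adjMatrix ℝ * Sbar = Sbar * Bbar := by rw [hBC, hAS]
  -- Sbar.mulVec x = ν
  have hSx : Sbar.mulVec x = ν := by
    funext u
    rw [Matrix.mulVec, dotProduct]
    obtain ⟨j₀, hj₀, huniq⟩ := hpart u
    rw [Finset.sum_eq_single j₀]
    · simp only [Sbar, if_pos hj₀]
      exact div_mul_cancel₀ _ (ne_of_gt (hx j₀))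
    · intro j _ hjne
      have : u ∉ Vc j := fun h => hjne (huniq j h)
      simp [Sbar, this]
    · intro h; exact absurd (Finset.mem_univ j₀) h
  -- Sbarᵀ.mulVec ν = x
  have hSTν : Sbarᵀ.mulVec ν = x := by
    funext i
    rw [Matrix.mulVec, dotProduct]
    have : ∀ u : V, Sbarᵀ i u * ν u = if u ∈ Vc i then ν u ^ 2 / x i else 0 := by
      intro u
      simp only [Matrix.transpose_apply]
      simp only [Sbar]
      split_ifs <;> ring
    rw [Finset.sum_congr rfl (fun u _ => this u), Finset.sum_ite_mem, Finset.univ_inter,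
      ← Finset.sum_div, ← hx2 i, pow_two, mul_div_assoc,
      div_self (ne_of_gt (hx i)), mul_one]
  constructor
  · refine ⟨x, ?_, ?_⟩
    · -- x ≠ 0 : m ≥ 1 since V nonempty
      obtain ⟨v⟩ := hG.nonempty
      obtain ⟨i₀, _, _⟩ := hpart v
      intro h0
      exact absurd (congrFun h0 i₀) (ne_of_gt (hx i₀))
    · show (Sbarᵀ * G.adjMatrix ℝ * Sbar).mulVec x = lam • x
      rw [Matrix.mul_assoc, ← Matrix.mulVec_mulVec, ← Matrix.mulVec_mulVec, hSx, heig,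
        Matrix.mulVec_smul, hSTν]
  · intro μ y hy hμ
    have hz : Sbar.mulVec y ≠ 0 := by
      intro h0
      apply hy
      have : (Sbarᵀ * Sbar).mulVec y = Sbarᵀ.mulVec (Sbar.mulVec y) := by
        rw [Matrix.mulVec_mulVec]
      rw [hSS, Matrix.one_mulVec] at this
      rw [this, h0, Matrix.mulVec_zero]
    apply hmax μ (Sbar.mulVec y) hz
    rw [Matrix.mulVec_mulVec, hASB, ← Matrix.mulVec_mulVec, hμ, Matrix.mulVec_smul]
end

section
/- Let G be a connected graph with a weight-equitable partition {V₁,...,Vₘ} and largest adjacency eigenvalue λ₁. Then the vector x = (‖ρ(V₁)‖, ..., ‖ρ(Vₘ)‖)ᵀ is an eigenvector of the normalized weight-quotient matrix B̄* with eigenvalue λ₁. -/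
open Finset Matrix

variable {V : Type*}

/-- The vector of cell norms `(‖ρ(V₁)‖, …, ‖ρ(Vₘ)‖)` is an eigenvector of the
normalized weight-quotient matrix with eigenvalue `lam = λ₁`. -/
theorem norm_vector_is_eigenvector_of_weight_quotient
    [Fintype V] [DecidableEq V] (G : SimpleGraph V) [DecidableRel G.Adj]
    (hG : G.Connected) (ν : V → ℝ) (lam : ℝ)
    (hν : ∀ v, 0 < ν v)
    (heig : (G.adjMatrix ℝ).mulVec ν = lam • ν)
    (hmax : ∀ (μ : ℝ) (x : V → ℝ), x ≠ 0 → (G.adjMatrix ℝ).mulVec x = μ • x → μ ≤ lam)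
    {m : ℕ} (Vc : Fin m → Finset V)
    (hpart : IsPartition Vc) (hne : ∀ i, (Vc i).Nonempty)
    (hWE : IsWeightEquitable G ν Vc) :
    let Sbar : Matrix V (Fin m) ℝ :=
      fun u i => if u ∈ Vc i then ν u / Real.sqrt (∑ w ∈ Vc i, (ν w) ^ 2) else 0
    let Bbar : Matrix (Fin m) (Fin m) ℝ := Sbarᵀ * G.adjMatrix ℝ * Sbar
    Bbar.mulVec (fun i => Real.sqrt (∑ w ∈ Vc i, (ν w) ^ 2)) =
      lam • (fun i => Real.sqrt (∑ w ∈ Vc i, (ν w) ^ 2)) := by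
  intro Sbar Bbar
  have hpos : ∀ i, 0 < ∑ w ∈ Vc i, (ν w) ^ 2 := by
    intro i
    obtain ⟨w, hw⟩ := hne i
    exact Finset.sum_pos' (fun x _ => sq_nonneg _) ⟨w, hw, pow_pos (hν w) 2⟩
  have hsq : ∀ i, 0 < Real.sqrt (∑ w ∈ Vc i, (ν w) ^ 2) :=
    fun i => Real.sqrt_pos.2 (hpos i)
  set x : Fin m → ℝ := fun i => Real.sqrt (∑ w ∈ Vc i, (ν w) ^ 2) with hx
  have hS : Sbar.mulVec x = ν := by
    funext u
    obtain ⟨i, hi, huniq⟩ := hpart u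
    simp only [Matrix.mulVec, dotProduct]
    rw [Finset.sum_eq_single i]
    · simp only [Sbar, hi, if_true, hx]
      exact div_mul_cancel₀ _ (hsq i).ne'
    · intro j _ hj
      have : u ∉ Vc j := fun h => hj (huniq j h)
      simp [Sbar, this]
    · simp
  have hST : Sbarᵀ.mulVec ν = x := by
    funext i
    simp only [Matrix.mulVec, dotProduct, Matrix.transpose_apply]
    have h1 : ∀ u, Sbar u i * ν u = if u ∈ Vc i then (ν u) ^ 2 / x i else 0 := by
      intro u
      by_cases h : u ∈ Vc i <;> simp [Sbar, h, hx] <;> ring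
    simp_rw [h1]
    rw [Finset.sum_ite_mem, Finset.univ_inter, ← Finset.sum_div, hx]
    exact Real.div_sqrt
  have key : Bbar.mulVec x = Sbarᵀ.mulVec ((G.adjMatrix ℝ).mulVec (Sbar.mulVec x)) := by
    show (Sbarᵀ * SimpleGraph.adjMatrix ℝ G * Sbar) *ᵥ x = _
    rw [← Matrix.mulVec_mulVec, ← Matrix.mulVec_mulVec]
  rw [key, hS, heig, Matrix.mulVec_smul, hST]
end

section
/- Let G be a connected graph with Perron eigenvector ν and let P = {V₁,...,Vₘ} be a weight-equitable partition of V(G). Then ν is constant on each cell of P if and only if P is an equitable partition of G. -/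
open Finset Matrix

variable {V : Type*}

lemma zero_propagates [Fintype V] (G : SimpleGraph V) [DecidableRel G.Adj]
    (hG : G.Connected) (lam : ℝ) (x : V → ℝ)
    (hx : (G.adjMatrix ℝ).mulVec x = lam • x) (hnn : ∀ v, 0 ≤ x v)
    (u : V) (hu : x u = 0) : ∀ v, x v = 0 := by
  have step : ∀ a b : V, G.Adj a b → x a = 0 → x b = 0 := by
    intro a b hab ha
    have h1 : ∑ w ∈ G.neighborFinset a, x w = 0 := by
      have := congrFun hx a
      rw [SimpleGraph.adjMatrix_mulVec_apply] at this
      simp [this, ha]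
    have := (Finset.sum_eq_zero_iff_of_nonneg (fun w _ => hnn w)).mp h1 b
    exact this (by simpa using hab)
  have key : ∀ {a b : V} (w : G.Walk a b), x a = 0 → x b = 0 := by
    intro a b w
    induction w with
    | nil => exact id
    | cons h p ih => exact fun ha => ih (step _ _ h ha)
  intro v
  exact (hG.preconnected u v).elim fun w => key w hu

lemma eig_pt [Fintype V] (G : SimpleGraph V) [DecidableRel G.Adj]
    (ν : V → ℝ) (lam : ℝ)
    (heig : (G.adjMatrix ℝ).mulVec ν = lam • ν) :
    ∀ w, ∑ v, (if G.Adj w v then ν v else 0) = lam * ν w := by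
  classical
  intro w
  have h := congrFun heig w
  rw [SimpleGraph.adjMatrix_mulVec_apply] at h
  have h2 : ∑ u ∈ G.neighborFinset w, ν u = lam * ν w := by simpa using h
  rw [← h2, ← Finset.sum_filter]
  congr 1
  ext v
  simp [SimpleGraph.mem_neighborFinset]

/-- For a weight-equitable partition of a connected graph, the Perron eigenvector is
constant on each cell iff the partition is equitable. -/
theorem perron_constant_on_cells_iff_equitable
    [Fintype V] [DecidableEq V] (G : SimpleGraph V) [DecidableRel G.Adj]
    (hG : G.Connected) (ν : V → ℝ) (lam : ℝ)
    (hν : ∀ v, 0 < ν v)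
    (heig : (G.adjMatrix ℝ).mulVec ν = lam • ν)
    {m : ℕ} (Vc : Fin m → Finset V)
    (hpart : IsPartition Vc)
    (hWE : IsWeightEquitable G ν Vc) :
    (∀ i : Fin m, ∀ u ∈ Vc i, ∀ u' ∈ Vc i, ν u = ν u') ↔ IsEquitable G Vc := by
  classical
  constructor
  · -- constant on cells → equitable
    intro hc i j u hu u' hu'
    have hw := hWE i j u hu u' hu'
    unfold wInt at hw
    rcases (Vc j).eq_empty_or_nonempty with he | ⟨w0, hw0⟩
    · simp [he]
    · have hsum : ∀ z : V, (∑ v ∈ Vc j, if G.Adj z v then ν v else 0)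
          = (((Vc j).filter (fun v => G.Adj z v)).card : ℝ) * ν w0 := by
        intro z
        rw [← Finset.sum_filter,
          Finset.sum_congr rfl (fun v hv => hc j v (Finset.mem_filter.mp hv).1 w0 hw0)]
        simp [mul_comm]
      rw [hsum u, hsum u', hc i u hu u' hu',
        div_eq_div_iff (ne_of_gt (hν u')) (ne_of_gt (hν u'))] at hw
      have h1 := mul_right_cancel₀ (ne_of_gt (hν u')) hw
      have h2 := mul_right_cancel₀ (ne_of_gt (hν w0)) h1
      exact_mod_cast h2
  · -- equitable → constant on cells
    intro hEq i u hu u' hu'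
    have hchoice : ∀ v : V, ∃ k : Fin m, v ∈ Vc k := fun v => (hpart v).exists
    choose idx hidx using hchoice
    have huniq : ∀ v j, v ∈ Vc j → idx v = j := fun v j hj =>
      ((hpart v).unique (hidx v) hj)
    set S : Fin m → ℝ := fun j => ∑ w ∈ Vc j, ν w with hSdef
    set nn : Fin m → ℝ := fun j => ((Vc j).card : ℝ) with hnndef
    set c : Fin m → ℝ := fun j => S j / nn j with hcdef
    set nb : V → ℝ := fun v => c (idx v) with hnbdef
    set ca : V → Fin m → ℝ := fun z j => (((Vc j).filter (fun v => G.Adj z v)).card : ℝ)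
      with hcadef
    -- equitable, cast to ℝ
    have hEqR : ∀ i0 j0 : Fin m, ∀ z ∈ Vc i0, ∀ z' ∈ Vc i0, ca z j0 = ca z' j0 := by
      intro i0 j0 z hz z' hz'
      exact Nat.cast_inj.mpr (hEq i0 j0 z hz z' hz')
    have hnpos : ∀ j0 : Fin m, (Vc j0).Nonempty → 0 < nn j0 := by
      intro j0 hj0
      show (0:ℝ) < ((Vc j0).card : ℝ)
      exact_mod_cast Finset.card_pos.mpr hj0
    -- decomposition of sums over V by cells
    have hdecomp : ∀ f : V → ℝ, ∑ v, f v = ∑ j, ∑ v ∈ Vc j, f v := by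
      intro f
      have h1 : ∀ j, ∑ v ∈ Vc j, f v = ∑ v, if v ∈ Vc j then f v else 0 := by
        intro j
        rw [Finset.sum_ite_mem, Finset.univ_inter]
      simp_rw [h1]
      rw [Finset.sum_comm]
      refine Finset.sum_congr rfl fun v _ => ?_
      rw [Finset.sum_eq_single_of_mem (idx v) (Finset.mem_univ _)]
      · exact (if_pos (hidx v)).symm
      · intro j _ hj
        exact if_neg (fun hvj => hj (huniq v j hvj).symm)
    have heigpt := eig_pt G ν lam heig
    -- claim 1 : lam * S i0 = ∑ j, ∑ v ∈ Vc j, ν v * ca v i0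
    have lamS : ∀ i0 : Fin m, lam * S i0 = ∑ j, ∑ v ∈ Vc j, ν v * ca v i0 := by
      intro i0
      have h0 : lam * S i0 = ∑ z ∈ Vc i0, ∑ v, (if G.Adj z v then ν v else 0) := by
        rw [hSdef]; simp only [Finset.mul_sum]
        exact Finset.sum_congr rfl fun z _ => (heigpt z).symm
      rw [h0]
      have hsw : ∀ z : V, (∑ v, if G.Adj z v then ν v else 0)
          = ∑ j, ∑ v ∈ Vc j, (if G.Adj z v then ν v else 0) :=
        fun z => hdecomp _
      simp_rw [hsw]
      rw [Finset.sum_comm]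
      refine Finset.sum_congr rfl fun j _ => ?_
      rw [Finset.sum_comm]
      refine Finset.sum_congr rfl fun v _ => ?_
      calc ∑ z ∈ Vc i0, (if G.Adj z v then ν v else 0)
          = ∑ z ∈ (Vc i0).filter (fun z => G.Adj z v), ν v := (Finset.sum_filter _ _).symm
        _ = ∑ z ∈ (Vc i0).filter (fun z => G.Adj v z), ν v := by
            congr 1
            apply Finset.filter_congr
            intro z _
            simp [G.adj_comm]
        _ = ν v * ca v i0 := by
            rw [Finset.sum_const, nsmul_eq_mul, mul_comm]
    -- double counting
    have dcount : ∀ i0 j0 : Fin m, ∑ z ∈ Vc i0, ca z j0 = ∑ z ∈ Vc j0, ca z i0 := by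
      intro i0 j0
      have h1 : ∀ (z : V) (k : Fin m), ca z k = ∑ v ∈ Vc k, (if G.Adj z v then (1:ℝ) else 0) := by
        intro z k
        show ((((Vc k).filter (fun v => G.Adj z v)).card : ℕ) : ℝ) = _
        push_cast [Finset.card_filter]
        exact Finset.sum_congr rfl fun v _ => by split <;> simp
      simp_rw [h1]
      rw [Finset.sum_comm]
      exact Finset.sum_congr rfl fun v _ => Finset.sum_congr rfl fun z _ => by
        simp [G.adj_comm]
    -- eigen equation for nb
    have heigbar : ∀ w : V, ∑ v, (if G.Adj w v then nb v else 0) = lam * nb w := by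
      intro w
      have hwmem : w ∈ Vc (idx w) := hidx w
      have hnipos : (0:ℝ) < nn (idx w) := hnpos _ ⟨w, hwmem⟩
      have key : nn (idx w) * (∑ j, c j * ca w j) = lam * S (idx w) := by
        rw [lamS (idx w), Finset.mul_sum]
        refine Finset.sum_congr rfl fun j _ => ?_
        rcases (Vc j).eq_empty_or_nonempty with he | ⟨r, hr⟩
        · have hca0 : ca w j = 0 := by
            show (((Vc j).filter (fun v => G.Adj w v)).card : ℝ) = 0
            simp [he]
          simp [he, hca0]
        · have hnjpos : (0:ℝ) < nn j := hnpos _ ⟨r, hr⟩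
          have hrhs : ∑ v ∈ Vc j, ν v * ca v (idx w) = S j * ca r (idx w) := by
            rw [hSdef]
            simp only [Finset.sum_mul]
            exact Finset.sum_congr rfl fun v hv => by rw [hEqR j (idx w) v hv r hr]
          have hrel : nn j * ca r (idx w) = nn (idx w) * ca w j := by
            have h1 : ∑ z ∈ Vc j, ca z (idx w) = nn j * ca r (idx w) := by
              rw [Finset.sum_congr rfl (fun z hz => hEqR j (idx w) z hz r hr),
                Finset.sum_const, nsmul_eq_mul]
            have h2 : ∑ z ∈ Vc (idx w), ca z j = nn (idx w) * ca w j := by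
              rw [Finset.sum_congr rfl (fun z hz => hEqR (idx w) j z hz w hwmem),
                Finset.sum_const, nsmul_eq_mul]
            rw [← h1, ← h2, dcount]
          rw [hrhs]
          have hcj : c j = S j / nn j := rfl
          calc nn (idx w) * (c j * ca w j)
              = S j / nn j * (nn (idx w) * ca w j) := by rw [hcj]; ring
            _ = S j / nn j * (nn j * ca r (idx w)) := by rw [hrel]
            _ = (S j / nn j * nn j) * ca r (idx w) := by ring
            _ = S j * ca r (idx w) := by rw [div_mul_cancel₀ _ (ne_of_gt hnjpos)]
      have hLHS : ∑ v, (if G.Adj w v then nb v else 0) = ∑ j, c j * ca w j := by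
        rw [hdecomp]
        refine Finset.sum_congr rfl fun j _ => ?_
        calc ∑ v ∈ Vc j, (if G.Adj w v then nb v else 0)
            = ∑ v ∈ (Vc j).filter (fun v => G.Adj w v), nb v := (Finset.sum_filter _ _).symm
          _ = ∑ v ∈ (Vc j).filter (fun v => G.Adj w v), c j :=
              Finset.sum_congr rfl fun v hv => by
                show c (idx v) = c j
                rw [huniq v j (Finset.mem_filter.mp hv).1]
          _ = c j * ca w j := by
              rw [Finset.sum_const, nsmul_eq_mul, mul_comm]
      rw [hLHS]
      have hfin : ∑ j, c j * ca w j = lam * S (idx w) / nn (idx w) := by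
        rw [← key]
        field_simp
      rw [hfin]
      show lam * S (idx w) / nn (idx w) = lam * (S (idx w) / nn (idx w))
      ring
    -- matrix form
    have heigbarM : (G.adjMatrix ℝ).mulVec nb = lam • nb := by
      funext w
      rw [SimpleGraph.adjMatrix_mulVec_apply]
      have h1 : ∑ v, (if G.Adj w v then nb v else 0) = ∑ v ∈ G.neighborFinset w, nb v := by
        rw [← Finset.sum_filter]
        congr 1
        ext v
        simp [SimpleGraph.mem_neighborFinset]
      rw [← h1, heigbar w]
      simp
    -- positivity of nb
    have hnbpos : ∀ v, 0 < nb v := by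
      intro v
      have hvmem := hidx v
      have hSpos : 0 < S (idx v) := Finset.sum_pos (fun w _ => hν w) ⟨v, hvmem⟩
      exact div_pos hSpos (hnpos _ ⟨v, hvmem⟩)
    -- min ratio trick
    have hne : (Finset.univ : Finset V).Nonempty := ⟨u, Finset.mem_univ u⟩
    set t : ℝ := Finset.univ.inf' hne (fun v => nb v / ν v) with htdef
    obtain ⟨a, _, ha⟩ := Finset.exists_mem_eq_inf' hne (fun v => nb v / ν v)
    set x : V → ℝ := fun v => nb v - t * ν v with hxdef
    have hxnn : ∀ v, 0 ≤ x v := by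
      intro v
      have h1 : t ≤ nb v / ν v := Finset.inf'_le _ (Finset.mem_univ v)
      have h2 := (le_div_iff₀ (hν v)).mp h1
      show 0 ≤ nb v - t * ν v
      linarith
    have hxa : x a = 0 := by
      show nb a - t * ν a = 0
      have h1 : t = nb a / ν a := ha
      rw [h1, div_mul_cancel₀ _ (ne_of_gt (hν a))]
      ring
    have hxeig : (G.adjMatrix ℝ).mulVec x = lam • x := by
      have hx' : x = nb - t • ν := funext fun v => rfl
      rw [hx', Matrix.mulVec_sub, Matrix.mulVec_smul, heigbarM, heig]
      funext v
      show lam * nb v - t * (lam * ν v) = lam * (nb v - t * ν v)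
      ring
    have hx0 := zero_propagates G hG lam x hxeig hxnn a hxa
    have hveq : ∀ v, nb v = t * ν v := by
      intro v
      have h := hx0 v
      have h' : nb v - t * ν v = 0 := h
      linarith
    have htpos : 0 < t := by
      nlinarith [hveq u, hν u, hnbpos u]
    have hval : ∀ v, ν v = nb v / t := by
      intro v
      rw [eq_div_iff (ne_of_gt htpos), hveq v]
      ring
    rw [hval u, hval u']
    congr 1
    show c (idx u) = c (idx u')
    rw [huniq u i hu, huniq u' i hu']
end

section
/- Every equitable partition of a connected graph is weight-equitable. -/
open Finset Matrix

variable {V : Type*}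

/-- Every equitable partition of a connected graph is weight-equitable. -/
theorem equitable_is_weightEquitable
    [Fintype V] [DecidableEq V] (G : SimpleGraph V) [DecidableRel G.Adj]
    (hG : G.Connected)
    (ν : V → ℝ) (lam : ℝ)
    (hν : ∀ v, 0 < ν v)
    (heig : (G.adjMatrix ℝ).mulVec ν = lam • ν)
    {m : ℕ} (Vc : Fin m → Finset V)
    (hpart : IsPartition Vc)
    (hEP : IsEquitable G Vc) :
    IsWeightEquitable G ν Vc := by
  classical
  -- pointwise eigenvalue equation for ν
  have heig' : ∀ u : V, ∑ x ∈ G.neighborFinset u, ν x = lam * ν u := by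
    intro u
    have h := congrFun heig u
    simpa [SimpleGraph.adjMatrix_mulVec_apply] using h
  -- index of the unique cell containing a vertex
  choose idx hidx using hpart
  have hmem : ∀ v : V, v ∈ Vc (idx v) := fun v => (hidx v).1
  have mem_iff : ∀ (v : V) (j : Fin m), v ∈ Vc j ↔ idx v = j := by
    intro v j
    constructor
    · intro h; exact ((hidx v).2 j h).symm
    · intro h; exact h ▸ hmem v
  -- averaged weights
  set W : Fin m → ℝ := fun j => (∑ x ∈ Vc j, ν x) / ((Vc j).card : ℝ) with hWdef
  set w : V → ℝ := fun v => W (idx v) with hwdef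
  set b : V → Fin m → ℕ := fun u j => ((Vc j).filter (fun v => G.Adj u v)).card with hbdef
  -- positivity
  have hwpos : ∀ v : V, 0 < w v := by
    intro v
    have hv : v ∈ Vc (idx v) := hmem v
    have h1 : 0 < ∑ x ∈ Vc (idx v), ν x := Finset.sum_pos (fun x _ => hν x) ⟨v, hv⟩
    have h2 : (0 : ℝ) < ((Vc (idx v)).card : ℝ) := by
      exact_mod_cast Finset.card_pos.mpr ⟨v, hv⟩
    exact div_pos h1 h2
  -- sum decomposition over cells
  have hdecomp : ∀ f : V → ℝ, ∑ x, f x = ∑ j, ∑ x ∈ Vc j, f x := by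
    intro f
    have hfib : ∀ j : Fin m, Vc j = Finset.univ.filter (fun v => idx v = j) := by
      intro j; ext v; simp [mem_iff]
    rw [← Finset.sum_fiberwise Finset.univ idx f]
    exact Finset.sum_congr rfl fun j _ => by rw [hfib j]
  -- neighbor sums split over cells
  have hnbr : ∀ (u : V) (f : V → ℝ), ∑ x ∈ G.neighborFinset u, f x
      = ∑ j, ∑ x ∈ (Vc j).filter (fun v => G.Adj u v), f x := by
    intro u f
    rw [SimpleGraph.neighborFinset_eq_filter, Finset.sum_filter, hdecomp]
    exact Finset.sum_congr rfl fun j _ => (Finset.sum_filter _ _).symm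
  -- neighbor sum of w
  have hwsum : ∀ u : V, ∑ x ∈ G.neighborFinset u, w x = ∑ j, (b u j : ℝ) * W j := by
    intro u
    rw [hnbr u w]
    refine Finset.sum_congr rfl fun j _ => ?_
    have : ∀ x ∈ (Vc j).filter (fun v => G.Adj u v), w x = W j := by
      intro x hx
      have hxj : x ∈ Vc j := Finset.mem_of_mem_filter _ hx
      simp only [hwdef]
      rw [(mem_iff x j).mp hxj]
    rw [Finset.sum_congr rfl this, Finset.sum_const, nsmul_eq_mul]
  -- double counting
  have hDC : ∀ i j : Fin m, ∑ x ∈ Vc j, (b x i : ℝ) = ∑ v ∈ Vc i, (b v j : ℝ) := by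
    intro i j
    have h1 : ∀ (x : V) (k : Fin m),
        (b x k : ℝ) = ∑ v ∈ Vc k, if G.Adj x v then (1 : ℝ) else 0 := by
      intro x k
      have h2 : b x k = ∑ v ∈ Vc k, if G.Adj x v then 1 else 0 := by
        simp only [hbdef]; exact Finset.card_filter _ _
      rw [h2]; push_cast; rfl
    simp_rw [h1]
    rw [Finset.sum_comm]
    refine Finset.sum_congr rfl fun v _ => Finset.sum_congr rfl fun x _ => ?_
    by_cases h : G.Adj x v
    · simp [h, G.adj_symm h]
    · have h' : ¬ G.Adj v x := fun hh => h (G.adj_symm hh)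
      simp [h, h']
  -- w is an eigenvector with eigenvalue lam
  have hweig : ∀ u : V, ∑ x ∈ G.neighborFinset u, w x = lam * w u := by
    intro u
    have hui : u ∈ Vc (idx u) := hmem u
    have hcard : (0 : ℝ) < ((Vc (idx u)).card : ℝ) := by
      exact_mod_cast Finset.card_pos.mpr ⟨u, hui⟩
    -- numerator identity
    have hnum : ∑ v ∈ Vc (idx u), lam * ν v
        = ∑ j, (b u j : ℝ) * ((Vc (idx u)).card : ℝ) * W j := by
      have step1 : ∑ v ∈ Vc (idx u), lam * ν v
          = ∑ v ∈ Vc (idx u), ∑ j, ∑ x ∈ (Vc j).filter (fun y => G.Adj v y), ν x := by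
        refine Finset.sum_congr rfl fun v _ => ?_
        rw [← heig' v, hnbr v ν]
      rw [step1, Finset.sum_comm]
      refine Finset.sum_congr rfl fun j _ => ?_
      -- fixed j : compute the inner double sum
      have swap : ∑ v ∈ Vc (idx u), ∑ x ∈ (Vc j).filter (fun y => G.Adj v y), ν x
          = ∑ x ∈ Vc j, (b x (idx u) : ℝ) * ν x := by
        have e1 : ∀ v ∈ Vc (idx u), ∑ x ∈ (Vc j).filter (fun y => G.Adj v y), ν x
            = ∑ x ∈ Vc j, if G.Adj v x then ν x else 0 := by
          intro v _; exact Finset.sum_filter _ _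
        rw [Finset.sum_congr rfl e1, Finset.sum_comm]
        refine Finset.sum_congr rfl fun x _ => ?_
        have e2 : ∀ v ∈ Vc (idx u), (if G.Adj v x then ν x else 0)
            = (if G.Adj x v then (1 : ℝ) else 0) * ν x := by
          intro v _
          by_cases h : G.Adj v x
          · simp [h, G.adj_symm h]
          · have h' : ¬ G.Adj x v := fun hh => h (G.adj_symm hh)
            simp [h, h']
        rw [Finset.sum_congr rfl e2, ← Finset.sum_mul]
        congr 1
        have hcf : b x (idx u) = ∑ v ∈ Vc (idx u), if G.Adj x v then 1 else 0 := by
          simp only [hbdef]; exact Finset.card_filter _ _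
        rw [hcf]; push_cast; rfl
      rw [swap]
      rcases (Vc j).eq_empty_or_nonempty with he | ⟨x0, hx0⟩
      · have : b u j = 0 := by simp [hbdef, he]
        simp [he, this]
      · have hconstb : ∀ x ∈ Vc j, (b x (idx u) : ℝ) = (b x0 (idx u) : ℝ) := by
          intro x hx
          simp only [hbdef]
          exact_mod_cast hEP j (idx u) x hx x0 hx0
        have h3 : ∑ x ∈ Vc j, (b x (idx u) : ℝ) * ν x
            = (b x0 (idx u) : ℝ) * ∑ x ∈ Vc j, ν x := by
          rw [Finset.mul_sum]
          exact Finset.sum_congr rfl fun x hx => by rw [hconstb x hx]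
        rw [h3]
        -- key cardinality identity
        have h4 : (b x0 (idx u) : ℝ) * ((Vc j).card : ℝ)
            = (b u j : ℝ) * ((Vc (idx u)).card : ℝ) := by
          have l : ∑ x ∈ Vc j, (b x (idx u) : ℝ) = (b x0 (idx u) : ℝ) * ((Vc j).card : ℝ) := by
            rw [Finset.sum_congr rfl hconstb, Finset.sum_const, nsmul_eq_mul, mul_comm]
          have r : ∑ v ∈ Vc (idx u), (b v j : ℝ) = (b u j : ℝ) * ((Vc (idx u)).card : ℝ) := by
            have : ∀ v ∈ Vc (idx u), (b v j : ℝ) = (b u j : ℝ) := by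
              intro v hv
              simp only [hbdef]
              exact_mod_cast hEP (idx u) j v hv u hui
            rw [Finset.sum_congr rfl this, Finset.sum_const, nsmul_eq_mul, mul_comm]
          rw [← l, ← r, hDC]
        have hsum : ∑ x ∈ Vc j, ν x = W j * ((Vc j).card : ℝ) := by
          rcases Nat.eq_zero_or_pos (Vc j).card with h0 | h0
          · exact absurd (Finset.card_eq_zero.mp h0 ▸ hx0) (Finset.notMem_empty x0)
          · have : ((Vc j).card : ℝ) ≠ 0 := by positivity
            simp only [hWdef]
            field_simp
        rw [hsum]
        calc (b x0 (idx u) : ℝ) * (W j * ((Vc j).card : ℝ))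
            = ((b x0 (idx u) : ℝ) * ((Vc j).card : ℝ)) * W j := by ring
          _ = ((b u j : ℝ) * ((Vc (idx u)).card : ℝ)) * W j := by rw [h4]
          _ = (b u j : ℝ) * ((Vc (idx u)).card : ℝ) * W j := by ring
    -- conclude
    have hlhs : (∑ x ∈ G.neighborFinset u, w x) * ((Vc (idx u)).card : ℝ)
        = lam * w u * ((Vc (idx u)).card : ℝ) := by
      rw [hwsum u, Finset.sum_mul]
      have : lam * w u * ((Vc (idx u)).card : ℝ) = ∑ v ∈ Vc (idx u), lam * ν v := by
        simp only [hwdef, hWdef]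
        rw [← Finset.mul_sum]
        field_simp
      rw [this, hnum]
      exact Finset.sum_congr rfl fun j _ => by ring
    exact mul_right_cancel₀ hcard.ne' hlhs
  -- minimum of ν / w
  have hVne : Nonempty V := hG.nonempty
  obtain ⟨v0, -, hmin⟩ :=
    Finset.exists_min_image Finset.univ (fun v => ν v / w v) Finset.univ_nonempty
  set c : ℝ := ν v0 / w v0 with hcdef
  set z : V → ℝ := fun v => ν v - c * w v with hzdef
  have hznn : ∀ v, 0 ≤ z v := by
    intro v
    have h1 : c ≤ ν v / w v := hmin v (Finset.mem_univ v)
    have h2 : c * w v ≤ ν v := (le_div_iff₀ (hwpos v)).mp h1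
    simpa [hzdef] using sub_nonneg.mpr h2
  have hz0 : z v0 = 0 := by
    simp only [hzdef, hcdef]
    rw [div_mul_cancel₀ _ (hwpos v0).ne']
    ring
  have hzeig : ∀ u : V, ∑ x ∈ G.neighborFinset u, z x = lam * z u := by
    intro u
    simp only [hzdef]
    rw [Finset.sum_sub_distrib, ← Finset.mul_sum, heig' u, hweig u]
    ring
  have hprop : ∀ a : V, z a = 0 → ∀ b' : V, G.Adj a b' → z b' = 0 := by
    intro a ha b' hab
    have h0 : ∑ x ∈ G.neighborFinset a, z x = 0 := by rw [hzeig a, ha, mul_zero]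
    exact (Finset.sum_eq_zero_iff_of_nonneg (fun x _ => hznn x)).mp h0 b'
      ((SimpleGraph.mem_neighborFinset G a b').mpr hab)
  have hwalk : ∀ (a b' : V) (_ : G.Walk a b'), z a = 0 → z b' = 0 := by
    intro a b' p
    induction p with
    | nil => exact id
    | cons h q ih => exact fun ha => ih (hprop _ ha _ h)
  have hzall : ∀ v, z v = 0 := by
    intro v
    obtain ⟨p⟩ := hG.preconnected v0 v
    exact hwalk v0 v p hz0
  have hνw : ∀ v, ν v = c * w v := fun v => sub_eq_zero.mp (hzall v)
  -- ν is constant on cells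
  have hconst : ∀ (k : Fin m), ∀ a ∈ Vc k, ν a = c * W k := by
    intro k a ha
    rw [hνw a]
    simp only [hwdef]
    rw [(mem_iff a k).mp ha]
  -- conclude weight-equitability
  intro i j u hu u' hu'
  have hsumval : ∀ x : V, (∑ v ∈ Vc j, if G.Adj x v then ν v else 0)
      = (b x j : ℝ) * (c * W j) := by
    intro x
    rw [← Finset.sum_filter]
    have : ∀ v ∈ (Vc j).filter (fun y => G.Adj x y), ν v = c * W j := by
      intro v hv
      exact hconst j v (Finset.mem_of_mem_filter _ hv)
    rw [Finset.sum_congr rfl this, Finset.sum_const, nsmul_eq_mul]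
  have hbu : b u j = b u' j := hEP i j u hu u' hu'
  have hν1 : ν u = c * W i := hconst i u hu
  have hν2 : ν u' = c * W i := hconst i u' hu'
  unfold wInt
  rw [hsumval u, hsumval u', hν1, hν2, hbu]
end

section
/- If P is a weight-equitable partition of a connected graph G with adjacency matrix A, then the matrix X_P defined by (X_P)_{vv'} = ν_v ν_{v'}/‖ρ(P_i)‖² if v, v' lie in the same cell P_i and 0 otherwise, commutes with A. -/
open Finset Matrix

variable {V : Type*}

/-- For a weight-equitable partition `P`, the matrix `X_P` (with entries
`ν_v ν_{v'} / ‖ρ(Vᵢ)‖²` for `v, v'` in a common cell `Vᵢ`, `0` otherwise)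
commutes with the adjacency matrix. -/
theorem XP_commutes_with_adjMatrix
    [Fintype V] [DecidableEq V] (G : SimpleGraph V) [DecidableRel G.Adj]
    (hG : G.Connected)
    (ν : V → ℝ) (lam : ℝ)
    (hν : ∀ v, 0 < ν v)
    (heig : (G.adjMatrix ℝ).mulVec ν = lam • ν)
    {m : ℕ} (Vc : Fin m → Finset V)
    (hpart : IsPartition Vc)
    (hWE : IsWeightEquitable G ν Vc) :
    let XP : Matrix V V ℝ := fun v v' =>
      ∑ i : Fin m, if v ∈ Vc i ∧ v' ∈ Vc i then ν v * ν v' / (∑ w ∈ Vc i, (ν w) ^ 2) else 0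
    XP * G.adjMatrix ℝ = G.adjMatrix ℝ * XP := by
  intro XP
  have hν0 : ∀ v, ν v ≠ 0 := fun v => (hν v).ne'
  set N : Fin m → ℝ := fun k => ∑ w ∈ Vc k, (ν w) ^ 2 with hN
  set S : Fin m → V → ℝ := fun k u => ∑ w ∈ Vc k, if G.Adj u w then ν w else 0 with hS
  have hSw : ∀ k u, S k u = ν u * wInt G ν (Vc k) u := by
    intro k u
    rw [wInt, mul_div_cancel₀ _ (hν0 u)]
  -- symmetry of the double sum
  have hT : ∀ k l, (∑ u ∈ Vc l, ν u * S k u) = ∑ u ∈ Vc k, ν u * S l u := by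
    intro k l
    simp only [hS, Finset.mul_sum]
    rw [Finset.sum_comm]
    refine Finset.sum_congr rfl fun w hw => Finset.sum_congr rfl fun u hu => ?_
    by_cases h : G.Adj u w
    · simp [h, h.symm, mul_comm]
    · have h' : ¬ G.Adj w u := fun a => h a.symm
      simp [h, h']
  -- key identity from weight-equitability
  have hkey : ∀ k l y, y ∈ Vc l → N l * S k y = ν y * ∑ u ∈ Vc l, ν u * S k u := by
    intro k l y hy
    show (∑ u ∈ Vc l, (ν u) ^ 2) * S k y = ν y * ∑ u ∈ Vc l, ν u * S k u
    rw [Finset.sum_mul, Finset.mul_sum]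
    refine Finset.sum_congr rfl fun u hu => ?_
    have h2 : ν y * S k u = ν u * S k y := by
      rw [hSw k u, hSw k y, hWE l k u hu y hy]; ring
    calc (ν u) ^ 2 * S k y = ν u * (ν u * S k y) := by ring
      _ = ν u * (ν y * S k u) := by rw [h2]
      _ = ν y * (ν u * S k u) := by ring
  -- simplified form of XP entries
  have hXP : ∀ (x : V) (k : Fin m), x ∈ Vc k → ∀ y,
      XP x y = if y ∈ Vc k then ν x * ν y / N k else 0 := by
    intro x k hk y
    obtain ⟨i0, hi0, hu⟩ := hpart x
    have hki : k = i0 := hu k hk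
    show (∑ i : Fin m, if x ∈ Vc i ∧ y ∈ Vc i then ν x * ν y / (∑ w ∈ Vc i, (ν w) ^ 2) else 0)
      = _
    rw [Finset.sum_eq_single k]
    · by_cases hy : y ∈ Vc k <;> simp [hk, hy, hN]
    · intro b _ hbk
      have hxb : x ∉ Vc b := fun hb => hbk (by rw [hu b hb, hki])
      simp [hxb]
    · simp
  have hXPsymm : ∀ a b, XP a b = XP b a := by
    intro a b
    show (∑ i : Fin m, _) = (∑ i : Fin m, _)
    refine Finset.sum_congr rfl fun i _ => ?_
    by_cases ha : a ∈ Vc i <;> by_cases hb : b ∈ Vc i <;> simp [ha, hb, mul_comm]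
  ext v v'
  obtain ⟨i, hvi, _⟩ := hpart v
  obtain ⟨j, hv'j, _⟩ := hpart v'
  have hNi : 0 < N i :=
    Finset.sum_pos' (fun w _ => sq_nonneg _) ⟨v, hvi, pow_pos (hν v) 2⟩
  have hNj : 0 < N j :=
    Finset.sum_pos' (fun w _ => sq_nonneg _) ⟨v', hv'j, pow_pos (hν v') 2⟩
  have hL : (XP * G.adjMatrix ℝ) v v' = ν v * S i v' / N i := by
    rw [mul_apply]
    calc ∑ w, XP v w * G.adjMatrix ℝ w v'
        = ∑ w ∈ Finset.univ ∩ Vc i, ν v * ν w / N i * (if G.Adj w v' then 1 else 0) := by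
          simp only [hXP v i hvi, SimpleGraph.adjMatrix_apply, ite_mul, zero_mul]
          rw [Finset.sum_ite_mem]
      _ = ν v * S i v' / N i := by
          rw [Finset.univ_inter, hS]
          simp only [Finset.mul_sum, Finset.sum_div]
          refine Finset.sum_congr rfl fun w hw => ?_
          by_cases h : G.Adj v' w
          · simp [h, h.symm]
          · have h' : ¬ G.Adj w v' := fun a => h a.symm
            simp [h, h']
  have hR : (G.adjMatrix ℝ * XP) v v' = ν v' * S j v / N j := by
    rw [mul_apply]
    calc ∑ w, G.adjMatrix ℝ v w * XP w v'
        = ∑ w ∈ Finset.univ ∩ Vc j, (if G.Adj v w then 1 else 0) * (ν v' * ν w / N j) := by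
          simp only [SimpleGraph.adjMatrix_apply]
          rw [← Finset.sum_ite_mem]
          refine Finset.sum_congr rfl fun w _ => ?_
          rw [hXPsymm w v', hXP v' j hv'j w]
          by_cases hw : w ∈ Vc j <;> simp [hw]
      _ = ν v' * S j v / N j := by
          rw [Finset.univ_inter, hS]
          simp only [Finset.mul_sum, Finset.sum_div]
          refine Finset.sum_congr rfl fun w hw => ?_
          by_cases h : G.Adj v w <;> simp [h]
  rw [hL, hR, div_eq_div_iff hNi.ne' hNj.ne']
  have e1 := hkey i j v' hv'j
  have e2 := hkey j i v hvi
  have e3 := hT i j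
  linear_combination ν v * e1 - ν v' * e2 + ν v * ν v' * e3
end

section
/- Let G be a connected graph and P a partition of V(G). Then P is weight-equitable if and only if the subspace F(V,P) of real functions on V that are constant on the cells of P is invariant under the linear operator B defined by (Bf)(u) = Σ_{v∼u} (ν_v/ν_u) f(v). -/
open Finset Matrix

variable {V : Type*}

/-- A partition is weight-equitable iff the space of functions constant on its cells is
invariant under the operator `(Bf)(u) = ∑_{v ∼ u} (ν_v / ν_u) f(v)`. -/
theorem weightEquitable_iff_B_invariant
    [Fintype V] [DecidableEq V] (G : SimpleGraph V) [DecidableRel G.Adj]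
    (hG : G.Connected)
    (ν : V → ℝ) (lam : ℝ)
    (hν : ∀ v, 0 < ν v)
    (heig : (G.adjMatrix ℝ).mulVec ν = lam • ν)
    {m : ℕ} (Vc : Fin m → Finset V)
    (hpart : IsPartition Vc) :
    IsWeightEquitable G ν Vc ↔
      ∀ f : V → ℝ, (∀ i : Fin m, ∀ u ∈ Vc i, ∀ u' ∈ Vc i, f u = f u') →
        (∀ i : Fin m, ∀ u ∈ Vc i, ∀ u' ∈ Vc i,
          (∑ v : V, if G.Adj u v then (ν v / ν u) * f v else 0) =
          (∑ v : V, if G.Adj u' v then (ν v / ν u') * f v else 0)) := by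
  constructor
  · intro hwe f hf i u hu u' hu'
    have key : ∀ w : V, ∀ g : V → ℝ,
        (∑ v : V, if G.Adj w v then (ν v / ν w) * g v else 0)
          = ∑ j : Fin m, ∑ v ∈ Vc j, if G.Adj w v then (ν v / ν w) * g v else 0 := by
      intro w g
      calc (∑ v : V, if G.Adj w v then (ν v / ν w) * g v else 0)
          = ∑ v : V, ∑ j : Fin m,
              if v ∈ Vc j then (if G.Adj w v then (ν v / ν w) * g v else 0) else 0 := by
            refine Finset.sum_congr rfl fun v _ => ?_
            obtain ⟨j, hj, hun⟩ := hpart v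
            rw [Finset.sum_eq_single j]
            · simp [hj]
            · intro k _ hk
              have : v ∉ Vc k := fun h => hk (hun k h)
              simp [this]
            · simp
        _ = ∑ j : Fin m, ∑ v : V,
              if v ∈ Vc j then (if G.Adj w v then (ν v / ν w) * g v else 0) else 0 :=
            Finset.sum_comm
        _ = ∑ j : Fin m, ∑ v ∈ Vc j, if G.Adj w v then (ν v / ν w) * g v else 0 := by
            refine Finset.sum_congr rfl fun j _ => ?_
            rw [Finset.sum_ite_mem, Finset.univ_inter]
    rw [key u f, key u' f]
    refine Finset.sum_congr rfl fun j _ => ?_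
    rcases (Vc j).eq_empty_or_nonempty with h | ⟨w, hw⟩
    · simp [h]
    · have h1 : ∀ z : V, (∑ v ∈ Vc j, if G.Adj z v then (ν v / ν z) * f v else 0)
          = (∑ v ∈ Vc j, if G.Adj z v then ν v else 0) * (f w / ν z) := by
        intro z
        rw [Finset.sum_mul]
        refine Finset.sum_congr rfl fun v hv => ?_
        rw [hf j v hv w hw]
        by_cases hzv : G.Adj z v
        · simp only [if_pos hzv]; ring
        · simp [hzv]
      rw [h1 u, h1 u']
      have h2 := hwe i j u hu u' hu'
      rw [wInt, wInt] at h2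
      have e1 : ∀ a b c : ℝ, a * (b / c) = a / c * b := fun a b c => by ring
      rw [e1, e1, h2]
  · intro hB i j u hu u' hu'
    set f : V → ℝ := fun v => if v ∈ Vc j then (1 : ℝ) else 0 with hfdef
    have hmem : ∀ k : Fin m, ∀ z : V, z ∈ Vc k → (z ∈ Vc j ↔ k = j) := by
      intro k z hz
      constructor
      · intro hzj
        obtain ⟨i0, _, hun⟩ := hpart z
        rw [hun k hz, hun j hzj]
      · rintro rfl; exact hz
    have hf : ∀ k : Fin m, ∀ z ∈ Vc k, ∀ z' ∈ Vc k, f z = f z' := by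
      intro k z hz z' hz'
      simp only [hfdef]
      by_cases hkj : k = j
      · simp [(hmem k z hz).mpr hkj, (hmem k z' hz').mpr hkj]
      · have h1 : z ∉ Vc j := fun h => hkj ((hmem k z hz).mp h)
        have h2 : z' ∉ Vc j := fun h => hkj ((hmem k z' hz').mp h)
        simp [h1, h2]
    have hside : ∀ z : V, (∑ v : V, if G.Adj z v then (ν v / ν z) * f v else 0)
        = wInt G ν (Vc j) z := by
      intro z
      calc (∑ v : V, if G.Adj z v then (ν v / ν z) * f v else 0)
          = ∑ v : V, if v ∈ Vc j then (if G.Adj z v then ν v / ν z else 0) else 0 := by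
            refine Finset.sum_congr rfl fun v _ => ?_
            by_cases h1 : G.Adj z v <;> by_cases h2 : v ∈ Vc j <;> simp [hfdef, h1, h2]
        _ = ∑ v ∈ Vc j, if G.Adj z v then ν v / ν z else 0 := by
            rw [Finset.sum_ite_mem, Finset.univ_inter]
        _ = wInt G ν (Vc j) z := by
            rw [wInt, Finset.sum_div]
            exact Finset.sum_congr rfl fun v _ => by
              by_cases h1 : G.Adj z v <;> simp [h1]
    have h := hB f hf i u hu u' hu'
    rwa [hside u, hside u'] at h
end

section
/- If P and Q are weight-equitable partitions of a connected graph G, then their join P ∨ Q (in the partition lattice, i.e., the finest common coarsening) is also a weight-equitable partition of G. -/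
open Finset

variable {V : Type*}

open scoped Classical in
/-- The weight-intersection number of `u` with respect to the cell of `w` in the
partition given by the setoid `s`. -/
noncomputable def wIntS [Fintype V] (G : SimpleGraph V) (ν : V → ℝ) (s : Setoid V)
    (w u : V) : ℝ :=
  (∑ v : V, if G.Adj u v ∧ s.r w v then ν v else 0) / ν u

/-- The partition given by the setoid `s` is weight-equitable w.r.t. `ν`:
the weight-intersection numbers are constant on each cell. -/
def IsWeightEquitableS [Fintype V] (G : SimpleGraph V) (ν : V → ℝ) (s : Setoid V) : Prop :=
  ∀ u u' : V, s.r u u' → ∀ w : V, wIntS G ν s w u = wIntS G ν s w u'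

open scoped Classical in
lemma wIntS_coarser_aux [Fintype V] (G : SimpleGraph V)
    (ν : V → ℝ) (s r : Setoid V)
    (hsr : ∀ x y, s.r x y → r.r x y)
    (hs : IsWeightEquitableS G ν s) {u u' : V} (h : s.r u u') (w : V) :
    wIntS G ν r w u = wIntS G ν r w u' := by
  have key : ∀ z : V, wIntS G ν r w z
      = ∑ q : Quotient s, if r.r w q.out then wIntS G ν s q.out z else 0 := by
    intro z
    unfold wIntS
    have : ∀ q : Quotient s,
        (if r.r w q.out then (∑ v : V, if G.Adj z v ∧ s.r q.out v then ν v else 0) / ν z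
          else 0)
        = (∑ v : V, if r.r w q.out then (if G.Adj z v ∧ s.r q.out v then ν v else 0)
            else 0) / ν z := by
      intro q
      by_cases hq : r.r w q.out <;> simp [hq]
    simp only [this]
    rw [← Finset.sum_div]
    congr 1
    rw [Finset.sum_comm]
    refine Finset.sum_congr rfl fun v _ => ?_
    have hout : ∀ v' : V, s.r (Quotient.mk s v').out v' :=
      fun v' => Quotient.exact (Quotient.out_eq _)
    rw [Finset.sum_eq_single (Quotient.mk s v)]
    · have h1 : s.r (Quotient.mk s v).out v := hout v
      have h2 : r.r w (Quotient.mk s v).out ↔ r.r w v :=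
        ⟨fun hw => r.trans hw (hsr _ _ h1), fun hw => r.trans hw (r.symm (hsr _ _ h1))⟩
      by_cases ha : G.Adj z v
      · by_cases hw : r.r w v <;> simp [ha, hw, h1, h2]
      · simp [ha]
    · intro q _ hq
      have : ¬ s.r q.out v := by
        intro hsv
        exact hq (by rw [← Quotient.out_eq q, Quotient.eq]; exact hsv)
      simp [this]
    · simp
  rw [key u, key u']
  refine Finset.sum_congr rfl fun q _ => ?_
  by_cases hq : r.r w q.out
  · simp only [hq, if_true]
    exact hs u u' h q.out
  · simp [hq]

/-- The join of two weight-equitable partitions of a connected graph is weight-equitable. -/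
theorem join_of_weightEquitable_is_weightEquitable
    [Fintype V] (G : SimpleGraph V) (hG : G.Connected)
    (ν : V → ℝ) (lam : ℝ)
    (hν : ∀ v, 0 < ν v)
    [DecidableRel G.Adj]
    (heig : (G.adjMatrix ℝ).mulVec ν = lam • ν)
    (s t : Setoid V)
    (hs : IsWeightEquitableS G ν s) (ht : IsWeightEquitableS G ν t) :
    IsWeightEquitableS G ν (s ⊔ t) := by
  intro u u' h w
  have h' : Relation.EqvGen (fun x y => s.r x y ∨ t.r x y) u u' := by
    have := h
    rw [Setoid.sup_eq_eqvGen] at this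
    exact this
  clear h
  induction h' with
  | rel x y hxy =>
    rcases hxy with hxy | hxy
    · exact wIntS_coarser_aux G ν s (s ⊔ t)
        (fun a b hab => (le_sup_left : s ≤ s ⊔ t) hab) hs hxy w
    · exact wIntS_coarser_aux G ν t (s ⊔ t)
        (fun a b hab => (le_sup_right : t ≤ s ⊔ t) hab) ht hxy w
  | refl x => rfl
  | symm x y _ ih => exact ih.symm
  | trans x y z _ _ ih1 ih2 => exact ih1.trans ih2
end

section
/- Every partition P of the vertex set of a connected graph G has a unique maximal (coarsest) weight-equitable refinement, given by the join of all weight-equitable partitions refining P. -/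
open Finset

variable {V : Type*}

open scoped Classical

/-- Size (weight 1 each) of the cell of `v` in the partition given by `r`. -/
noncomputable def cSize [Fintype V] (r : Setoid V) (v : V) : ℝ :=
  ∑ x : V, if r.r v x then (1:ℝ) else 0

lemma cSize_pos [Fintype V] (r : Setoid V) (v : V) : 0 < cSize r v := by
  refine Finset.sum_pos' (fun x _ => by split <;> norm_num) ⟨v, Finset.mem_univ v, ?_⟩
  split
  · norm_num
  · exact absurd (r.refl v) ‹_›

lemma cSize_ne_zero [Fintype V] (r : Setoid V) (v : V) : cSize r v ≠ 0 :=
  (cSize_pos r v).ne'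

lemma cSize_congr [Fintype V] (r : Setoid V) {a b : V} (hab : r.r a b) :
    cSize r a = cSize r b := by
  refine Finset.sum_congr rfl fun x _ => ?_
  have : r.r a x ↔ r.r b x :=
    ⟨fun h => r.trans (r.symm hab) h, fun h => r.trans hab h⟩
  simp [this]

lemma cSize_symm_sum [Fintype V] (r : Setoid V) (v : V) :
    (∑ v' : V, if r.r v' v then (1:ℝ) else 0) = cSize r v := by
  refine Finset.sum_congr rfl fun x _ => ?_
  have : r.r x v ↔ r.r v x := ⟨r.symm, r.symm⟩
  simp [this]

/-- Decomposition of the weight-intersection numbers of a coarser partition `T` as a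
sum of weight-intersection numbers of a finer partition `r`. -/
lemma wIntS_decomp [Fintype V] (G : SimpleGraph V) (ν : V → ℝ) (r T : Setoid V)
    (hrT : r ≤ T) (w u : V) :
    wIntS G ν T w u = ∑ v' : V, if T.r w v' then wIntS G ν r v' u / cSize r v' else 0 := by
  have hsub : ∀ {a b : V}, r.r a b → T.r a b := fun h => hrT h
  -- the common double sum
  set F : V → V → ℝ := fun v' v =>
    if T.r w v ∧ G.Adj u v ∧ r.r v' v then ν v / cSize r v else 0 with hF
  have h1 : (∑ v : V, if G.Adj u v ∧ T.r w v then ν v else 0) = ∑ v : V, ∑ v' : V, F v' v := by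
    refine Finset.sum_congr rfl fun v _ => ?_
    have hinner : (∑ v' : V, F v' v)
        = if T.r w v ∧ G.Adj u v then ν v else 0 := by
      split_ifs with h
      · have hterm : ∀ v' : V,
            F v' v = (ν v / cSize r v) * (if r.r v' v then (1:ℝ) else 0) := by
          intro v'
          simp only [hF]
          split_ifs with h1 h2 h2
          · ring
          · exact absurd h1.2.2 h2
          · exact absurd ⟨h.1, h.2, h2⟩ h1
          · ring
        rw [Finset.sum_congr rfl fun v' _ => hterm v', ← Finset.mul_sum, cSize_symm_sum,
          div_mul_cancel₀ _ (cSize_ne_zero r v)]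
      · refine Finset.sum_eq_zero fun v' _ => ?_
        simp only [hF]
        rw [if_neg]
        exact fun hc => h ⟨hc.1, hc.2.1⟩
    rw [hinner]
    split_ifs with h1 h2 h2
    · rfl
    · exact absurd ⟨h1.2, h1.1⟩ h2
    · exact absurd ⟨h2.2, h2.1⟩ h1
    · rfl
  have h2 : (∑ v' : V, if T.r w v' then
      (∑ v : V, if G.Adj u v ∧ r.r v' v then ν v else 0) / cSize r v' else 0)
      = ∑ v' : V, ∑ v : V, F v' v := by
    refine Finset.sum_congr rfl fun v' _ => ?_
    split_ifs with h
    · rw [Finset.sum_div]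
      refine Finset.sum_congr rfl fun v _ => ?_
      simp only [hF]
      split_ifs with h1 h2 h2
      · rw [cSize_congr r h1.2]
      · exact absurd ⟨T.trans h (hsub h1.2), h1.1, h1.2⟩ h2
      · exact absurd ⟨h2.2.1, h2.2.2⟩ h1
      · exact zero_div _
    · refine (Finset.sum_eq_zero fun v _ => ?_).symm
      simp only [hF]
      rw [if_neg]
      rintro ⟨hTwv, -, hrv'v⟩
      exact h (T.trans hTwv (hsub (r.symm hrv'v)))
  simp only [wIntS]
  rw [h1, Finset.sum_comm, ← h2, Finset.sum_div]
  refine Finset.sum_congr rfl fun v' _ => ?_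
  split_ifs with h
  · rw [div_right_comm]
  · exact zero_div _

/-- The join of a set of weight-equitable partitions is weight-equitable. -/
lemma isWeightEquitableS_sSup [Fintype V] (G : SimpleGraph V) (ν : V → ℝ)
    (S : Set (Setoid V)) (hS : ∀ r ∈ S, IsWeightEquitableS G ν r) :
    IsWeightEquitableS G ν (sSup S) := by
  set T := sSup S with hT
  let E : Setoid V := ⟨fun a b => ∀ w, wIntS G ν T w a = wIntS G ν T w b,
    ⟨fun a w => rfl, fun h w => (h w).symm, fun h1 h2 w => (h1 w).trans (h2 w)⟩⟩
  have hle : T ≤ E := by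
    refine sSup_le fun r hr => ?_
    intro a b hab
    intro w
    rw [wIntS_decomp G ν r T (le_sSup hr) w a, wIntS_decomp G ν r T (le_sSup hr) w b]
    refine Finset.sum_congr rfl fun v' _ => ?_
    split_ifs with h
    · rw [hS r hr a b hab v']
    · rfl
  exact fun u u' h w => hle h w

/-- Every partition of a connected graph has a unique maximal (coarsest) weight-equitable
refinement, given by the join of all weight-equitable partitions refining it. -/
theorem unique_maximal_weightEquitable_refinement
    [Fintype V] (G : SimpleGraph V) (hG : G.Connected)
    (ν : V → ℝ) (lam : ℝ)
    (hν : ∀ v, 0 < ν v)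
    [DecidableRel G.Adj]
    (heig : (G.adjMatrix ℝ).mulVec ν = lam • ν)
    (s : Setoid V) :
    (sSup {r : Setoid V | r ≤ s ∧ IsWeightEquitableS G ν r} ≤ s ∧
      IsWeightEquitableS G ν (sSup {r : Setoid V | r ≤ s ∧ IsWeightEquitableS G ν r}) ∧
      ∀ r : Setoid V, r ≤ s → IsWeightEquitableS G ν r →
        r ≤ sSup {r : Setoid V | r ≤ s ∧ IsWeightEquitableS G ν r}) ∧
    ∃! t : Setoid V, t ≤ s ∧ IsWeightEquitableS G ν t ∧
      ∀ r : Setoid V, r ≤ s → IsWeightEquitableS G ν r → r ≤ t := by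
  set S : Set (Setoid V) := {r : Setoid V | r ≤ s ∧ IsWeightEquitableS G ν r} with hS
  have h1 : sSup S ≤ s := sSup_le fun r hr => hr.1
  have h2 : IsWeightEquitableS G ν (sSup S) :=
    isWeightEquitableS_sSup G ν S fun r hr => hr.2
  have h3 : ∀ r : Setoid V, r ≤ s → IsWeightEquitableS G ν r → r ≤ sSup S :=
    fun r hrs hre => le_sSup ⟨hrs, hre⟩
  refine ⟨⟨h1, h2, h3⟩, sSup S, ⟨h1, h2, h3⟩, ?_⟩
  rintro t ⟨ht1, ht2, ht3⟩
  exact le_antisymm (h3 t ht1 ht2) (ht3 _ h1 h2)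
end

section
/- Let G and H be graphs with a balanced weight-equitable joint partition P, and suppose G is connected. Then for every cell P ∈ P, ‖ρ(P∩V(G))‖² / ‖ρ(P∩V(H))‖² = ‖ρ(V(G))‖² / ‖ρ(V(H))‖². -/
open Finset

open scoped Classical in
/-- The weight-intersection number of `u` with respect to the cell `D`. -/
noncomputable def wIntC {α : Type*} (G : SimpleGraph α) (ν : α → ℝ) (D : Finset α)
    (u : α) : ℝ :=
  (∑ v ∈ D, if G.Adj u v then ν v else 0) / ν u

/-- `Vc` lists the cells of a partition of the vertex set. -/
def IsPartitionC {α : Type*} {m : ℕ} (Vc : Fin m → Finset α) : Prop :=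
  ∀ v : α, ∃! i : Fin m, v ∈ Vc i

/-- The partition with cells `Vc` is weight-equitable w.r.t. weights `ν`. -/
def IsWeightEquitableC {α : Type*} (G : SimpleGraph α) (ν : α → ℝ)
    {m : ℕ} (Vc : Fin m → Finset α) : Prop :=
  ∀ i j : Fin m, ∀ u ∈ Vc i, ∀ u' ∈ Vc i, wIntC G ν (Vc j) u = wIntC G ν (Vc j) u'

/-- For a balanced weight-equitable joint partition of `G` and `H` with `G` connected,
the ratio `‖ρ(P∩V(G))‖² / ‖ρ(P∩V(H))‖²` is the same for every cell `P`, namely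
`‖ρ(V(G))‖² / ‖ρ(V(H))‖²`. -/
theorem balanced_joint_partition_norm_ratio
    {V W : Type*} [Fintype V] [Fintype W] [DecidableEq V] [DecidableEq W]
    (G : SimpleGraph V) (H : SimpleGraph W)
    [DecidableRel G.Adj] [DecidableRel H.Adj] [DecidableRel (G ⊕g H).Adj]
    (hG : G.Connected)
    (ν : V ⊕ W → ℝ) (lam : ℝ)
    (hν : ∀ x, 0 < ν x)
    (heig : ((G ⊕g H).adjMatrix ℝ).mulVec ν = lam • ν)
    {m : ℕ} (Vc : Fin m → Finset (V ⊕ W))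
    (hpart : IsPartitionC Vc)
    (hWE : IsWeightEquitableC (G ⊕g H) ν Vc)
    (hbal : ∀ i : Fin m, (∃ u : V, Sum.inl u ∈ Vc i) ∧ (∃ w : W, Sum.inr w ∈ Vc i)) :
    ∀ i : Fin m,
      (∑ x ∈ (Vc i).filter (fun x => x.isLeft), (ν x) ^ 2) /
        (∑ x ∈ (Vc i).filter (fun x => x.isRight), (ν x) ^ 2) =
      (∑ u : V, (ν (Sum.inl u)) ^ 2) / (∑ w : W, (ν (Sum.inr w)) ^ 2) := by
  classical
  intro i0
  -- the cell-index map
  set c : V ⊕ W → Fin m := fun x => (hpart x).choose with hcdef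
  have hcmem : ∀ x, x ∈ Vc (c x) := fun x => (hpart x).choose_spec.1
  have hcuniq : ∀ x i, x ∈ Vc i → c x = i :=
    fun x i hx => ((hpart x).choose_spec.2 i hx).symm
  -- the left and right weights of each cell
  set A : Fin m → ℝ := fun i => ∑ x ∈ (Vc i).filter (fun x => x.isLeft), (ν x) ^ 2 with hAdef
  set B : Fin m → ℝ := fun i => ∑ x ∈ (Vc i).filter (fun x => x.isRight), (ν x) ^ 2 with hBdef
  have hA : ∀ i, 0 < A i := by
    intro i
    obtain ⟨u, hu⟩ := (hbal i).1
    refine Finset.sum_pos' (fun x _ => sq_nonneg _) ⟨Sum.inl u, ?_, pow_pos (hν _) 2⟩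
    simp [Finset.mem_filter, hu]
  have hB : ∀ i, 0 < B i := by
    intro i
    obtain ⟨w, hw⟩ := (hbal i).2
    refine Finset.sum_pos' (fun x _ => sq_nonneg _) ⟨Sum.inr w, ?_, pow_pos (hν _) 2⟩
    simp [Finset.mem_filter, hw]
  -- the quotient-matrix entries
  set b : Fin m → Fin m → ℝ :=
    fun i j => wIntC (G ⊕g H) ν (Vc j) (Sum.inl (hbal i).1.choose) with hbdef
  have hb : ∀ i j, ∀ u ∈ Vc i,
      (∑ v ∈ Vc j, if (G ⊕g H).Adj u v then ν v else 0) = ν u * b i j := by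
    intro i j u hu
    have h1 := hWE i j u hu (Sum.inl (hbal i).1.choose) (hbal i).1.choose_spec
    have h2 : wIntC (G ⊕g H) ν (Vc j) u = b i j := h1
    rw [wIntC, div_eq_iff (hν u).ne'] at h2
    rw [mul_comm, ← h2]
    refine Finset.sum_congr rfl fun v _ => ?_
    by_cases h : (G ⊕g H).Adj u v
    · rw [if_pos h, if_pos h]
    · rw [if_neg h, if_neg h]
  -- symmetry of the weighted edge counts
  have hsym : ∀ (p : V ⊕ W → Bool),
      (∀ u v, (G ⊕g H).Adj u v → p u = true → p v = true) →
      ∀ i j, (∑ x ∈ (Vc i).filter (fun x => p x), (ν x) ^ 2) * b i j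
           = (∑ x ∈ (Vc j).filter (fun x => p x), (ν x) ^ 2) * b j i := by
    intro p hp
    have hS : ∀ i j, (∑ x ∈ (Vc i).filter (fun x => p x), (ν x) ^ 2) * b i j
        = ∑ u ∈ (Vc i).filter (fun x => p x), ∑ v ∈ (Vc j).filter (fun x => p x),
            (if (G ⊕g H).Adj u v then ν u * ν v else 0) := by
      intro i j
      rw [Finset.sum_mul]
      refine Finset.sum_congr rfl ?_
      intro u hu
      rw [Finset.mem_filter] at hu
      rw [sq, mul_assoc, ← hb i j u hu.1, Finset.mul_sum, Finset.sum_filter]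
      refine Finset.sum_congr rfl fun v _ => ?_
      by_cases hadj : (G ⊕g H).Adj u v
      · rw [if_pos (hp u v hadj hu.2), if_pos hadj, if_pos hadj]
      · rw [if_neg hadj]
        simp only [if_neg hadj, mul_zero, ite_self]
    intro i j
    rw [hS i j, hS j i, Finset.sum_comm]
    refine Finset.sum_congr rfl fun v _ => Finset.sum_congr rfl fun u _ => ?_
    by_cases hadj : (G ⊕g H).Adj u v
    · rw [if_pos hadj, if_pos hadj.symm, mul_comm]
    · rw [if_neg hadj, if_neg (fun h => hadj (SimpleGraph.Adj.symm h))]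
  have hpl : ∀ u v, (G ⊕g H).Adj u v → u.isLeft = true → v.isLeft = true := by
    rintro (a | a) (b | b) hadj h
    · rfl
    · exact absurd hadj (by simp)
    · exact absurd h (by simp)
    · exact absurd h (by simp)
  have hpr : ∀ u v, (G ⊕g H).Adj u v → u.isRight = true → v.isRight = true := by
    rintro (a | a) (b | b) hadj h
    · exact absurd h (by simp)
    · exact absurd hadj (by simp)
    · exact absurd hadj (by simp)
    · rfl
  have hAsym : ∀ i j, A i * b i j = A j * b j i := hsym _ hpl
  have hBsym : ∀ i j, B i * b i j = B j * b j i := hsym _ hpr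
  -- cross-ratio equality when the quotient entry is nonzero
  have hcross : ∀ i j, b i j ≠ 0 → A i / B i = A j / B j := by
    intro i j hbne
    have hbji : b j i ≠ 0 := by
      intro h0
      have := hAsym i j
      rw [h0, mul_zero] at this
      exact hbne (by
        have := mul_eq_zero.mp this
        rcases this with h | h
        · exact absurd h (hA i).ne'
        · exact h)
    rw [div_eq_div_iff (hB i).ne' (hB j).ne']
    have h1 := hAsym i j
    have h2 := hBsym i j
    have key : (A i * B j) * (b i j * b j i) = (A j * B i) * (b i j * b j i) := by
      calc (A i * B j) * (b i j * b j i) = (A i * b i j) * (B j * b j i) := by ring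
        _ = (A j * b j i) * (B i * b i j) := by rw [h1, ← h2]
        _ = (A j * B i) * (b i j * b j i) := by ring
    exact mul_right_cancel₀ (mul_ne_zero hbne hbji) key
  -- a G-edge between cells makes the quotient entry nonzero
  have hedge : ∀ a a' : V, G.Adj a a' → b (c (Sum.inl a)) (c (Sum.inl a')) ≠ 0 := by
    intro a a' hadj
    have hsum := hb (c (Sum.inl a)) (c (Sum.inl a')) (Sum.inl a) (hcmem _)
    have hpos : 0 < ∑ v ∈ Vc (c (Sum.inl a')),
        if (G ⊕g H).Adj (Sum.inl a) v then ν v else 0 := by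
      refine Finset.sum_pos' (fun x _ => ?_) ⟨Sum.inl a', hcmem _, ?_⟩
      · by_cases h : (G ⊕g H).Adj (Sum.inl a) x
        · rw [if_pos h]; exact (hν _).le
        · rw [if_neg h]
      · rw [if_pos (show (G ⊕g H).Adj (Sum.inl a) (Sum.inl a') by simpa using hadj)]
        exact hν _
    rw [hsum] at hpos
    intro h0
    rw [h0, mul_zero] at hpos
    exact lt_irrefl _ hpos
  -- ratio is constant along walks in G
  have hratio : ∀ a a' : V,
      A (c (Sum.inl a)) / B (c (Sum.inl a)) = A (c (Sum.inl a')) / B (c (Sum.inl a')) := by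
    intro a a'
    obtain ⟨w⟩ := hG.preconnected a a'
    induction w with
    | nil => rfl
    | @cons x y z h p ih =>
      exact (hcross _ _ (hedge x y h)).trans ih
  -- ratio is constant across all cells
  have hconst : ∀ i j, A i / B i = A j / B j := by
    intro i j
    obtain ⟨a, ha⟩ := (hbal i).1
    obtain ⟨a', ha'⟩ := (hbal j).1
    have h1 : c (Sum.inl a) = i := hcuniq _ _ ha
    have h2 : c (Sum.inl a') = j := hcuniq _ _ ha'
    have := hratio a a'
    rwa [h1, h2] at this
  -- cross-multiplied form
  have hconst' : ∀ j, A i0 * B j = A j * B i0 := by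
    intro j
    have := hconst i0 j
    rw [div_eq_div_iff (hB i0).ne' (hB j).ne'] at this
    linarith [this]
  -- summing over all cells
  have hsumA : ∑ j, A j = ∑ u : V, (ν (Sum.inl u)) ^ 2 := by
    have hfib : ∀ j, (Vc j).filter (fun x => x.isLeft)
        = (Finset.univ.filter (fun x : V ⊕ W => x.isLeft)).filter (fun x => c x = j) := by
      intro j
      ext x
      simp only [Finset.mem_filter, Finset.mem_univ, true_and]
      constructor
      · rintro ⟨hx, hl⟩; exact ⟨hl, hcuniq _ _ hx⟩
      · rintro ⟨hl, hc⟩; exact ⟨hc ▸ hcmem x, hl⟩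
    calc ∑ j, A j = ∑ j, ∑ x ∈ (Finset.univ.filter (fun x : V ⊕ W => x.isLeft)).filter
            (fun x => c x = j), (ν x) ^ 2 := by
          refine Finset.sum_congr rfl fun j _ => ?_
          simp only [hAdef]; rw [hfib j]
      _ = ∑ x ∈ Finset.univ.filter (fun x : V ⊕ W => x.isLeft), (ν x) ^ 2 :=
          Finset.sum_fiberwise _ _ _
      _ = ∑ u : V, (ν (Sum.inl u)) ^ 2 := by
          rw [Finset.sum_filter, Fintype.sum_sum_type]
          simp
  have hsumB : ∑ j, B j = ∑ w : W, (ν (Sum.inr w)) ^ 2 := by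
    have hfib : ∀ j, (Vc j).filter (fun x => x.isRight)
        = (Finset.univ.filter (fun x : V ⊕ W => x.isRight)).filter (fun x => c x = j) := by
      intro j
      ext x
      simp only [Finset.mem_filter, Finset.mem_univ, true_and]
      constructor
      · rintro ⟨hx, hl⟩; exact ⟨hl, hcuniq _ _ hx⟩
      · rintro ⟨hl, hc⟩; exact ⟨hc ▸ hcmem x, hl⟩
    calc ∑ j, B j = ∑ j, ∑ x ∈ (Finset.univ.filter (fun x : V ⊕ W => x.isRight)).filter
            (fun x => c x = j), (ν x) ^ 2 := by
          refine Finset.sum_congr rfl fun j _ => ?_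
          simp only [hBdef]; rw [hfib j]
      _ = ∑ x ∈ Finset.univ.filter (fun x : V ⊕ W => x.isRight), (ν x) ^ 2 :=
          Finset.sum_fiberwise _ _ _
      _ = ∑ w : W, (ν (Sum.inr w)) ^ 2 := by
          rw [Finset.sum_filter, Fintype.sum_sum_type]
          simp
  have hkey : A i0 * (∑ j, B j) = (∑ j, A j) * B i0 := by
    rw [Finset.mul_sum, Finset.sum_mul]
    exact Finset.sum_congr rfl fun j _ => hconst' j
  have hBsumpos : 0 < ∑ j, B j := Finset.sum_pos (fun j _ => hB j) ⟨i0, Finset.mem_univ i0⟩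
  show A i0 / B i0 = (∑ u : V, (ν (Sum.inl u)) ^ 2) / (∑ w : W, (ν (Sum.inr w)) ^ 2)
  rw [← hsumA, ← hsumB, div_eq_div_iff (hB i0).ne' hBsumpos.ne']
  linarith [hkey]
end

section
/- Let G be a connected cograph. Then every weight-equitable partition of V(G) into n/2 cells each of size 2 is an equitable partition of G. -/
open Finset Matrix

variable {V : Type*}

/-- A cograph: a simple graph with no induced path on four vertices. -/
def IsCograph (G : SimpleGraph V) : Prop :=
  ∀ a b c d : V, a ≠ b → a ≠ c → a ≠ d → b ≠ c → b ≠ d → c ≠ d →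
    ¬(G.Adj a b ∧ G.Adj b c ∧ G.Adj c d ∧ ¬G.Adj a c ∧ ¬G.Adj b d ∧ ¬G.Adj a d)

lemma common_nbr_of_walk (G : SimpleGraph V) (hcog : IsCograph G) :
    ∀ {u u' : V} (_ : G.Walk u u'), ¬G.Adj u u' → u ≠ u' →
      ∃ c, G.Adj u c ∧ G.Adj u' c := by
  intro u u' p
  induction p with
  | nil => intro _ hne; exact absurd rfl hne
  | @cons u x1 u' h q ih =>
    intro hadj hne
    by_cases hx1 : x1 = u'
    · subst hx1; exact absurd h hadj
    by_cases hadj2 : G.Adj x1 u'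
    · exact ⟨x1, h, hadj2.symm⟩
    obtain ⟨c, hc1, hc2⟩ := ih hadj2 hx1
    by_cases huc : G.Adj u c
    · exact ⟨c, huc, hc2⟩
    exfalso
    have huc' : u ≠ c := by rintro rfl; exact hadj hc2.symm
    exact hcog u x1 c u' h.ne huc' hne hc1.ne hx1 hc2.ne'
      ⟨h, hc1, hc2.symm, huc, hadj2, hadj⟩

lemma card_filter_pair [DecidableEq V] (p : V → Prop) [DecidablePred p] {v w : V}
    (hvw : v ≠ w) :
    ((({v, w} : Finset V)).filter p).card =
      (if p v then 1 else 0) + (if p w then 1 else 0) := by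
  by_cases h1 : p v <;> by_cases h2 : p w <;>
    simp [Finset.filter_insert, Finset.filter_singleton, h1, h2, hvw]

/-- In a connected cograph, every weight-equitable partition into `n/2` cells of size `2`
is equitable. -/
theorem cograph_weightEquitable_pairs_is_equitable
    [Fintype V] [DecidableEq V] (G : SimpleGraph V) [DecidableRel G.Adj]
    (hG : G.Connected) (hcog : IsCograph G)
    (ν : V → ℝ) (lam : ℝ)
    (hν : ∀ v, 0 < ν v)
    (heig : (G.adjMatrix ℝ).mulVec ν = lam • ν)
    {m : ℕ} (Vc : Fin m → Finset V)
    (hm : 2 * m = Fintype.card V)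
    (hpart : IsPartition Vc) (hsize : ∀ i, (Vc i).card = 2)
    (hWE : IsWeightEquitable G ν Vc) :
    IsEquitable G Vc := by
  -- every cell is exactly a pair {u, u'} for any of its two members
  have hcell : ∀ i : Fin m, ∀ u ∈ Vc i, ∀ u' ∈ Vc i, u ≠ u' → Vc i = {u, u'} := by
    intro i u hu u' hu' hne
    refine (Finset.eq_of_subset_of_card_le ?_ ?_).symm
    · intro x hx
      rcases Finset.mem_insert.1 hx with rfl | hx
      · exact hu
      · rcases Finset.mem_singleton.1 hx with rfl
        exact hu'
    · rw [Finset.card_pair hne, hsize i]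
  -- cellmates have equal Perron weight
  have key' : ∀ i : Fin m, ∀ u ∈ Vc i, ∀ u' ∈ Vc i, ¬ ν u' < ν u := by
    intro i u hu u' hu' hlt
    have hne : u ≠ u' := by rintro rfl; exact lt_irrefl _ hlt
    have hVi : Vc i = {u, u'} := hcell i u hu u' hu' hne
    -- adjacent cellmates would have equal weights
    have hadj_uu' : ¬ G.Adj u u' := by
      intro hadj
      have hE := hWE i i u hu u' hu'
      rw [hVi] at hE
      simp only [wInt, Finset.sum_pair hne, if_pos hadj, if_pos hadj.symm,
        if_neg (G.irrefl (v := u)), if_neg (G.irrefl (v := u'))] at hE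
      rw [div_eq_div_iff (hν u).ne' (hν u').ne'] at hE
      nlinarith [hν u, hν u']
    -- common neighbor
    obtain ⟨p⟩ := hG.preconnected u u'
    obtain ⟨c, hc1, hc2⟩ := common_nbr_of_walk G hcog p hadj_uu' hne
    obtain ⟨j, hcj, -⟩ := hpart c
    have hji : j ≠ i := by
      rintro rfl
      rw [hVi] at hcj
      rcases Finset.mem_insert.1 hcj with rfl | hcj
      · exact hc1.ne rfl
      · exact hc2.ne (Finset.mem_singleton.1 hcj).symm
    have hdisj : ∀ x, x ∈ Vc i → x ∈ Vc j → False := by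
      intro x hxi hxj
      obtain ⟨k, -, hk⟩ := hpart x
      exact hji ((hk j hxj).trans (hk i hxi).symm)
    -- the cell of c is {c, d}
    obtain ⟨d, hdc, hVj⟩ : ∃ d, c ≠ d ∧ Vc j = {c, d} := by
      obtain ⟨x, y, hxy, hVj⟩ := Finset.card_eq_two.1 (hsize j)
      rw [hVj] at hcj
      rcases Finset.mem_insert.1 hcj with rfl | hcj
      · exact ⟨y, hxy, hVj⟩
      · rcases Finset.mem_singleton.1 hcj with rfl
        exact ⟨x, hxy.symm, by rw [hVj, Finset.pair_comm]⟩
    have hdj : d ∈ Vc j := by rw [hVj]; exact Finset.mem_insert_of_mem (Finset.mem_singleton_self d)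
    have hcj' : c ∈ Vc j := hcj
    have hdu : d ≠ u := by rintro rfl; exact hdisj d hu hdj
    have hdu' : d ≠ u' := by rintro rfl; exact hdisj d hu' hdj
    -- weight-equitability of cell i against cell j
    have hE := hWE i j u hu u' hu'
    rw [hVj] at hE
    simp only [wInt, Finset.sum_pair hdc, if_pos hc1, if_pos hc2] at hE
    rw [div_eq_div_iff (hν u).ne' (hν u').ne'] at hE
    by_cases h1 : G.Adj u d <;> by_cases h2 : G.Adj u' d <;>
      simp only [if_pos, if_neg, h1, h2, if_true, if_false, ite_true, ite_false] at hE
    · -- both adjacent to d : weights equal, contradiction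
      nlinarith [hν c, hν d, hν u, hν u']
    · -- u ~ d, u' ≁ d : the interesting case
      by_cases hcd : G.Adj c d
      · -- c ~ d forces ν c = ν d
        have hEj := hWE j j c hcj' d hdj
        rw [hVj] at hEj
        simp only [wInt, Finset.sum_pair hdc, if_pos hcd, if_pos hcd.symm,
          if_neg (G.irrefl (v := c)), if_neg (G.irrefl (v := d))] at hEj
        rw [div_eq_div_iff (hν c).ne' (hν d).ne'] at hEj
        have hcd_eq : ν c = ν d := by nlinarith [hν c, hν d]
        -- cross equitability: cell j against cell i
        have hX := hWE j i c hcj' d hdj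
        rw [hVi] at hX
        have hd_u' : ¬ G.Adj d u' := fun h => h2 h.symm
        simp only [wInt, Finset.sum_pair hne, if_pos hc1.symm, if_pos hc2.symm,
          if_pos h1.symm, if_neg hd_u'] at hX
        rw [div_eq_div_iff (hν c).ne' (hν d).ne'] at hX
        nlinarith [hν u, hν u', hν c, hν d]
      · -- otherwise u' - c - u - d is an induced P4
        have hu'c : u' ≠ c := hc2.ne
        exact hcog u' c u d hu'c hne.symm hdu'.symm hc1.ne' hdc hdu.symm
          ⟨hc2, hc1.symm, h1, fun h => hadj_uu' h.symm, hcd, h2⟩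
    · -- u ≁ d, u' ~ d : impossible since ν u' < ν u
      nlinarith [hν c, hν d, hν u, hν u']
    · -- neither adjacent to d : weights equal, contradiction
      nlinarith [hν c, hν u, hν u']
  have key : ∀ i : Fin m, ∀ u ∈ Vc i, ∀ u' ∈ Vc i, ν u = ν u' := by
    intro i u hu u' hu'
    exact le_antisymm (not_lt.1 (key' i u hu u' hu')) (not_lt.1 (key' i u' hu' u hu))
  -- now conclude equitability
  intro i j u hu u' hu'
  have hνe : ν u = ν u' := key i u hu u' hu'
  obtain ⟨v, w, hvw, hVj⟩ := Finset.card_eq_two.1 (hsize j)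
  have hE := hWE i j u hu u' hu'
  rw [hVj] at hE
  simp only [wInt, Finset.sum_pair hvw] at hE
  rw [div_eq_div_iff (hν u).ne' (hν u').ne', hνe] at hE
  have hE' : ((if G.Adj u v then ν v else 0) + (if G.Adj u w then ν w else 0)) =
      ((if G.Adj u' v then ν v else 0) + (if G.Adj u' w then ν w else 0)) :=
    mul_right_cancel₀ (hν u').ne' hE
  have hcount : ((if G.Adj u v then 1 else 0) + (if G.Adj u w then 1 else 0) : ℕ) =
      (if G.Adj u' v then 1 else 0) + (if G.Adj u' w then 1 else 0) := by
    by_cases h1 : G.Adj u v <;> by_cases h2 : G.Adj u w <;>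
      by_cases h3 : G.Adj u' v <;> by_cases h4 : G.Adj u' w <;>
      simp only [h1, h2, h3, h4, if_true, if_false, ite_true, ite_false] at hE' ⊢ <;>
      first
        | rfl
        | (exfalso; nlinarith [hν v, hν w])
  rw [hVj, card_filter_pair _ hvw, card_filter_pair _ hvw]
  exact hcount
end

section
/- Let G and H be graphs with adjacency matrices A and B, and let P be a balanced weight-equitable joint partition of G and H such that the weight ν is constant on each cell of P. Then A and B are fractionally isomorphic. -/
open Finset

/-- A matrix is doubly stochastic: nonnegative with all row and column sums one. -/
def IsDoublyStochastic {α : Type*} [Fintype α] (X : Matrix α α ℝ) : Prop :=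
  (∀ i j, 0 ≤ X i j) ∧ X.mulVec (fun _ => 1) = (fun _ => 1) ∧
    Matrix.vecMul (fun _ => 1) X = (fun _ => 1)

/-- If `G` and `H` have a balanced weight-equitable joint partition on which the weight
`ν` is constant on each cell, then their adjacency matrices are fractionally
isomorphic. -/
theorem balanced_weightEquitable_implies_fractionally_isomorphic
    {V W : Type*} [Fintype V] [Fintype W] [DecidableEq V] [DecidableEq W]
    (G : SimpleGraph V) (H : SimpleGraph W)
    [DecidableRel G.Adj] [DecidableRel H.Adj] [DecidableRel (G ⊕g H).Adj]
    (ν : V ⊕ W → ℝ) (lam : ℝ)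
    (hν : ∀ x, 0 < ν x)
    (heig : ((G ⊕g H).adjMatrix ℝ).mulVec ν = lam • ν)
    {m : ℕ} (Vc : Fin m → Finset (V ⊕ W))
    (hpart : IsPartitionC Vc)
    (hWE : IsWeightEquitableC (G ⊕g H) ν Vc)
    (hbal : ∀ i : Fin m, (∃ u : V, Sum.inl u ∈ Vc i) ∧ (∃ w : W, Sum.inr w ∈ Vc i))
    (hconst : ∀ i : Fin m, ∀ x ∈ Vc i, ∀ y ∈ Vc i, ν x = ν y) :
    ∃ X Y : Matrix (V ⊕ W) (V ⊕ W) ℝ,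
      IsDoublyStochastic X ∧ IsDoublyStochastic Y ∧
      X * (G ⊕g H).adjMatrix ℝ = (G ⊕g H).adjMatrix ℝ * Y ∧
      (∀ v : V, ∃ w : W, X (Sum.inl v) (Sum.inr w) ≠ 0) ∧
      (∀ w : W, ∃ v : V, X (Sum.inr w) (Sum.inl v) ≠ 0) ∧
      (∀ v : V, ∃ w : W, Y (Sum.inl v) (Sum.inr w) ≠ 0) ∧
      (∀ w : W, ∃ v : V, Y (Sum.inr w) (Sum.inl v) ≠ 0) := by

  classical
  choose cell hmem huq using hpart
  -- membership characterization
  have hiff : ∀ v i, v ∈ Vc i ↔ cell v = i := by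
    intro v i
    constructor
    · intro h; exact (huq v i h).symm
    · rintro rfl; exact hmem v
  -- cells are nonempty, with positive card
  have hcardpos : ∀ i : Fin m, 0 < ((Vc i).card : ℝ) := by
    intro i
    obtain ⟨⟨u, hu⟩, -⟩ := hbal i
    exact_mod_cast Finset.card_pos.mpr ⟨_, hu⟩
  -- the matrix
  set X : Matrix (V ⊕ W) (V ⊕ W) ℝ :=
    fun u v => if v ∈ Vc (cell u) then ((Vc (cell u)).card : ℝ)⁻¹ else 0 with hX
  have hXsymm : ∀ u v, X u v = X v u := by
    intro u v
    simp only [hX]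
    by_cases h : v ∈ Vc (cell u)
    · have h1 : cell v = cell u := (hiff v (cell u)).mp h
      have h2 : u ∈ Vc (cell v) := by rw [h1]; exact hmem u
      rw [if_pos h, if_pos h2, h1]
    · have h2 : u ∉ Vc (cell v) := by
        intro hu
        have := (hiff u (cell v)).mp hu
        exact h (by rw [this]; exact hmem v)
      rw [if_neg h, if_neg h2]
  have hrow : ∀ u, ∑ v, X u v = 1 := by
    intro u
    simp only [hX]
    rw [Finset.sum_ite_mem, Finset.univ_inter, Finset.sum_const, nsmul_eq_mul,
      mul_inv_cancel₀ (ne_of_gt (hcardpos (cell u)))]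
  have hcol : ∀ v, ∑ u, X u v = 1 := by
    intro v
    calc ∑ u, X u v = ∑ u, X v u := by simp_rw [hXsymm]
    _ = 1 := hrow v
  have hDS : IsDoublyStochastic X := by
    refine ⟨?_, ?_, ?_⟩
    · intro i j
      simp only [hX]
      split
      · positivity
      · exact le_refl 0
    · funext u
      simp only [Matrix.mulVec, dotProduct, mul_one]
      exact hrow u
    · funext v
      simp only [Matrix.vecMul, dotProduct, one_mul]
      exact hcol v
  -- degree sums
  set D : (V ⊕ W) → Fin m → ℝ := fun u j => ∑ v ∈ Vc j, ((G ⊕g H).adjMatrix ℝ) u v with hD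
  have hAsymm : ∀ u v, ((G ⊕g H).adjMatrix ℝ) u v = ((G ⊕g H).adjMatrix ℝ) v u := by
    intro u v
    simp [SimpleGraph.adjMatrix_apply, SimpleGraph.adj_comm]
  -- D is constant on cells
  have hDconst : ∀ i j : Fin m, ∀ u ∈ Vc i, ∀ u' ∈ Vc i, D u j = D u' j := by
    intro i j u hu u' hu'
    obtain ⟨⟨w0, hw0⟩, -⟩ := hbal j
    have hnum : ∀ x : V ⊕ W, wIntC (G ⊕g H) ν (Vc j) x = ν (Sum.inl w0) * D x j / ν x := by
      intro x
      rw [wIntC, hD]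
      congr 1
      rw [Finset.mul_sum]
      refine Finset.sum_congr rfl fun v hv => ?_
      have hc : ν v = ν (Sum.inl w0) := hconst j v hv _ hw0
      by_cases h : (G ⊕g H).Adj x v <;> simp [h, hc]
    have hwe := hWE i j u hu u' hu'
    rw [hnum, hnum, hconst i u hu u' hu'] at hwe
    have hνu' : ν u' ≠ 0 := ne_of_gt (hν u')
    have hνw : ν (Sum.inl w0) ≠ 0 := ne_of_gt (hν (Sum.inl w0))
    field_simp at hwe
    exact hwe
  -- double counting
  have hdouble : ∀ i j : Fin m, ∀ u ∈ Vc i, ∀ w ∈ Vc j,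
      ((Vc i).card : ℝ) * D u j = ((Vc j).card : ℝ) * D w i := by
    intro i j u hu w hw
    have h1 : ∑ x ∈ Vc i, D x j = ((Vc i).card : ℝ) * D u j := by
      rw [Finset.sum_congr rfl (fun x hx => hDconst i j x hx u hu), Finset.sum_const,
        nsmul_eq_mul]
    have h2 : ∑ y ∈ Vc j, D y i = ((Vc j).card : ℝ) * D w i := by
      rw [Finset.sum_congr rfl (fun y hy => hDconst j i y hy w hw), Finset.sum_const,
        nsmul_eq_mul]
    rw [← h1, ← h2]
    simp only [hD]
    refine Finset.sum_comm.trans ?_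
    exact Finset.sum_congr rfl fun y _ => Finset.sum_congr rfl fun x _ => hAsymm x y
  -- commutation
  have hcomm : X * ((G ⊕g H).adjMatrix ℝ) = ((G ⊕g H).adjMatrix ℝ) * X := by
    ext u w
    simp only [Matrix.mul_apply]
    have hL : ∑ v, X u v * ((G ⊕g H).adjMatrix ℝ) v w = ((Vc (cell u)).card : ℝ)⁻¹ * D w (cell u) := by
      have hterm : ∀ v, X u v * ((G ⊕g H).adjMatrix ℝ) v w =
          if v ∈ Vc (cell u) then ((Vc (cell u)).card : ℝ)⁻¹ * ((G ⊕g H).adjMatrix ℝ) w v else 0 := by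
        intro v
        simp only [hX]
        split
        · rw [hAsymm]
        · simp
      rw [Finset.sum_congr rfl (fun v _ => hterm v), Finset.sum_ite_mem, Finset.univ_inter,
        ← Finset.mul_sum]
    have hR : ∑ v, ((G ⊕g H).adjMatrix ℝ) u v * X v w = ((Vc (cell w)).card : ℝ)⁻¹ * D u (cell w) := by
      have hterm : ∀ v, ((G ⊕g H).adjMatrix ℝ) u v * X v w =
          if v ∈ Vc (cell w) then ((Vc (cell w)).card : ℝ)⁻¹ * ((G ⊕g H).adjMatrix ℝ) u v else 0 := by
        intro v
        rw [hXsymm v w]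
        simp only [hX]
        split
        · ring
        · simp
      rw [Finset.sum_congr rfl (fun v _ => hterm v), Finset.sum_ite_mem, Finset.univ_inter,
        ← Finset.mul_sum]
    rw [hL, hR]
    have hkey := hdouble (cell u) (cell w) u (hmem u) w (hmem w)
    have h1 := ne_of_gt (hcardpos (cell u))
    have h2 := ne_of_gt (hcardpos (cell w))
    field_simp
    linarith [hkey]
  -- nonvanishing entries
  have hnz : ∀ u v, v ∈ Vc (cell u) → X u v ≠ 0 := by
    intro u v hv
    simp only [hX, if_pos hv]
    exact inv_ne_zero (ne_of_gt (hcardpos (cell u)))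
  have hVW : ∀ v : V, ∃ w : W, X (Sum.inl v) (Sum.inr w) ≠ 0 := by
    intro v
    obtain ⟨-, w, hw⟩ := hbal (cell (Sum.inl v))
    exact ⟨w, hnz _ _ hw⟩
  have hWV : ∀ w : W, ∃ v : V, X (Sum.inr w) (Sum.inl v) ≠ 0 := by
    intro w
    obtain ⟨⟨v, hv⟩, -⟩ := hbal (cell (Sum.inr w))
    exact ⟨v, hnz _ _ hv⟩
  refine ⟨X, X, hDS, hDS, ?_, hVW, hWV, hVW, hWV⟩
  exact hcomm
end
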